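/- arXiv:2206.05247 — 10 statements merged into one kernel-verified Lean document; each statement's English description precedes it below -/
import Mathlib

section
/- Let d ≥ 1. For every tuple (i_0,…,i_{d−1}) ∈ (Fin d)^d, the controlled-order Kraus operator S_{i_0,…,i_{d−1}} := Σ_{j∈Fin d} (E^{(j)}_{i_j} · E^{(j⊕1)}_{i_{j⊕1}} · ⋯ · E^{(j⊕(d−1))}_{i_{j⊕(d−1)}}) ⊗ |j⟩⟨j| equals Σ_{j∈Fin d} s_j · |j⟩⟨i_{j⊖1}| ⊗ |j⟩⟨j|, where s_j = 1 if i_l = l⊕1 for every l ≠ j⊖1 and s_j = 0 otherwise. -/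
open Matrix Kronecker BigOperators Complex

noncomputable def Emat (d : ℕ) (j i : Fin d) : Matrix (Fin d) (Fin d) ℂ :=
  Matrix.single j i 1

noncomputable def P0 (d : ℕ) : Matrix (Fin d × Fin d) (Fin d × Fin d) ℂ :=
  ∑ j : Fin d, Emat d j j ⊗ₖ Emat d j j

noncomputable def Sop (d : ℕ) [NeZero d] (idx : Fin d → Fin d) :
    Matrix (Fin d × Fin d) (Fin d × Fin d) ℂ :=
  ∑ j : Fin d,
    (((List.finRange d).map (fun k => Emat d (j + k) (idx (j + k)))).prod) ⊗ₖ Emat d j j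

lemma Emat_mul (d : ℕ) (a b c e : Fin d) :
    Emat d a b * Emat d c e = if b = c then Emat d a e else 0 := by
  by_cases h : b = c
  · subst h
    simp [Emat]
  · rw [if_neg h]
    exact Matrix.single_mul_single_of_ne (h := h) ..

open Fin.NatCast Fin.CommRing in
lemma chainProd (d : ℕ) [NeZero d] (idx : Fin d → Fin d) (j : Fin d) :
    ∀ m : ℕ, m < d →
    ((List.range (m+1)).map (fun k : ℕ => Emat d (j + (k : Fin d)) (idx (j + (k : Fin d))))).prod
      = if (∀ k : ℕ, k < m → idx (j + (k : Fin d)) = j + (k : Fin d) + 1)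
        then Emat d j (idx (j + (m : Fin d))) else 0 := by
  intro m
  induction m with
  | zero =>
    intro _
    have : List.range 1 = [0] := rfl
    rw [this]
    simp only [List.map_cons, List.map_nil, List.prod_cons, List.prod_nil,
      mul_one, Nat.cast_zero, add_zero]
    simp
  | succ m ih =>
    intro hm
    have hm' : m < d := Nat.lt_of_succ_lt hm
    rw [List.range_succ, List.map_append, List.prod_append]
    rw [ih hm']
    simp only [List.map_cons, List.map_nil, List.prod_cons, List.prod_nil, mul_one]
    have hcast : ((m+1 : ℕ) : Fin d) = (m : Fin d) + 1 := by push_cast; ring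
    by_cases h1 : ∀ k : ℕ, k < m → idx (j + (k : Fin d)) = j + (k : Fin d) + 1
    · by_cases h2 : idx (j + (m : Fin d)) = j + (m : Fin d) + 1
      · have hall : ∀ k : ℕ, k < m + 1 → idx (j + (k : Fin d)) = j + (k : Fin d) + 1 := by
          intro k hk
          rcases Nat.lt_succ_iff_lt_or_eq.mp hk with hk' | rfl
          · exact h1 k hk'
          · exact h2
        rw [if_pos h1, if_pos hall, Emat_mul, hcast, if_pos (by rw [h2]; ring)]
      · have hnall : ¬ ∀ k : ℕ, k < m + 1 → idx (j + (k : Fin d)) = j + (k : Fin d) + 1 := by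
          intro hall; exact h2 (hall m (Nat.lt_succ_self m))
        rw [if_pos h1, if_neg hnall, Emat_mul, hcast,
          if_neg (fun h => h2 (by rw [h]; ring))]
    · have hnall : ¬ ∀ k : ℕ, k < m + 1 → idx (j + (k : Fin d)) = j + (k : Fin d) + 1 := by
        intro hall; exact h1 (fun k hk => hall k (Nat.lt_succ_of_lt hk))
      rw [if_neg h1, if_neg hnall, zero_mul]

open Fin.NatCast Fin.CommRing in
lemma cond_iff (d : ℕ) [NeZero d] (idx : Fin d → Fin d) (j : Fin d) :
    (∀ k : ℕ, k < d - 1 → idx (j + (k : Fin d)) = j + (k : Fin d) + 1)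
      ↔ (∀ l : Fin d, l ≠ j - 1 → idx l = l + 1) := by
  have hd : 1 ≤ d := Nat.one_le_iff_ne_zero.mpr (NeZero.ne d)
  have hcast : ((d - 1 : ℕ) : Fin d) = -1 := by
    rw [Nat.cast_sub hd, Fin.natCast_self, Nat.cast_one, zero_sub]
  constructor
  · intro h l hl
    set k := (l - j).val with hk
    have hkd : k < d := (l - j).isLt
    have hjk : j + (k : Fin d) = l := by
      rw [hk, Fin.cast_val_eq_self]; ring
    have hkne : k ≠ d - 1 := by
      intro he
      apply hl
      rw [← hjk, he, hcast]
      ring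
    have hklt : k < d - 1 := by omega
    have := h k hklt
    rwa [hjk] at this
  · intro h k hk
    have hkd : k < d := by omega
    apply h
    intro he
    have h2 : (k : Fin d) = -1 :=
      add_left_cancel (a := j) (b := (k : Fin d)) (c := -1) (by rw [he]; ring)
    have h3 : ((k : ℕ) : Fin d) = ((d - 1 : ℕ) : Fin d) := by rw [hcast, h2]
    have h1 := congrArg Fin.val h3
    rw [Fin.val_cast_of_lt hkd, Fin.val_cast_of_lt (by omega)] at h1
    omega

/-- the controlled-order Kraus operator `S_{i_0,…,i_{d−1}}` equals
`Σ_j s_j · |j⟩⟨i_{j⊖1}| ⊗ |j⟩⟨j|` with `s_j = 1` iff `i_l = l⊕1` for every `l ≠ j⊖1`. -/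
theorem stmt_0 (d : ℕ) [NeZero d] (idx : Fin d → Fin d) :
    Sop d idx = ∑ j : Fin d,
      (if ∀ l : Fin d, l ≠ j - 1 → idx l = l + 1 then (1 : ℂ) else 0) •
        (Emat d j (idx (j - 1)) ⊗ₖ Emat d j j) := by
  open Fin.NatCast Fin.CommRing in
  unfold Sop
  apply Finset.sum_congr rfl
  intro j _
  have hd : 1 ≤ d := Nat.one_le_iff_ne_zero.mpr (NeZero.ne d)
  have hrange : (List.finRange d).map (fun k => Emat d (j + k) (idx (j + k)))
      = (List.range d).map (fun k : ℕ => Emat d (j + (k : Fin d)) (idx (j + (k : Fin d)))) := by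
    rw [← List.map_coe_finRange_eq_range, List.map_map]
    congr 1
    funext x
    simp [Fin.cast_val_eq_self]
  have hd1 : d - 1 + 1 = d := Nat.succ_pred_eq_of_pos hd
  have hcast : ((d - 1 : ℕ) : Fin d) = -1 := by
    rw [Nat.cast_sub hd, Fin.natCast_self, Nat.cast_one, zero_sub]
  have hchain := chainProd d idx j (d - 1) (by omega)
  rw [hd1] at hchain
  have hj1 : j + ((d - 1 : ℕ) : Fin d) = j - 1 := by rw [hcast]; ring
  rw [hrange, hchain, hj1]
  by_cases h : ∀ l : Fin d, l ≠ j - 1 → idx l = l + 1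
  · rw [if_pos ((cond_iff d idx j).mpr h), if_pos h, one_smul]
  · rw [if_neg (fun hc => h ((cond_iff d idx j).mp hc)), if_neg h, zero_smul,
      Matrix.zero_kronecker]
end

section
/- Let d ≥ 1. Define, for each tuple (i_0,…,i_{d−1}) ∈ (Fin d)^d, the controlled-choice Kraus operator T_{i_0,…,i_{d−1}} := Σ_{j∈Fin d} t_j · |j⟩⟨i_j| ⊗ |j⟩⟨j|, where t_j := ∏_{l≠j} δ_{i_l,l} (i.e., t_j = 1 if i_l = l for every l ≠ j and t_j = 0 otherwise). Then for every matrix ρ on ℂ^d ⊗ ℂ^d, Σ_{(i_0,…,i_{d−1})∈(Fin d)^d} T_{i_0,…,i_{d−1}} ρ T_{i_0,…,i_{d−1}}† = Σ_{(i_0,…,i_{d−1})∈(Fin d)^d} S_{i_0,…,i_{d−1}} ρ S_{i_0,…,i_{d−1}}†; that is, the controlled choice of the d information-erasing channels (with vacuum amplitudes α^{(l)}_{i} = δ_{i,l}) and the controlled order of the d information-erasing channels define the same channel K. -/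
open Matrix Kronecker BigOperators Complex

/-- Controlled-choice Kraus operators with vacuum amplitudes `α^{(l)}_i = δ_{i,l}`. -/
noncomputable def TopKraus (d : ℕ) (idx : Fin d → Fin d) :
    Matrix (Fin d × Fin d) (Fin d × Fin d) ℂ :=
  ∑ j : Fin d, (∏ l ∈ Finset.univ.erase j, (if idx l = l then (1 : ℂ) else 0)) •
    (Emat d j (idx j) ⊗ₖ Emat d j j)

open Fin.NatCast Fin.CommRing

lemma prod_std_aux (d : ℕ) [NeZero d] (a b : ℕ → Fin d) :
    ∀ n, 1 ≤ n →
    ((List.range n).map (fun k => Matrix.single (a k) (b k) (1:ℂ))).prod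
    = (∏ k ∈ Finset.range (n-1), if b k = a (k+1) then (1:ℂ) else 0) •
        Matrix.single (a 0) (b (n-1)) 1 := by
  intro n
  induction n with
  | zero => intro h; omega
  | succ n ih =>
    intro _
    rcases Nat.eq_zero_or_pos n with h0 | hn
    · subst h0; simp [List.range_succ]
    · rw [List.range_succ, List.map_append, List.prod_append, ih hn]
      simp only [List.map_singleton, List.prod_singleton, smul_mul_assoc,
        Nat.add_sub_cancel]
      have hn' : n - 1 + 1 = n := Nat.sub_add_cancel hn
      rw [← hn', Finset.prod_range_succ, hn']
      by_cases h : b (n-1) = a n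
      · rw [show a n = a (n-1+1) by rw [hn']] at h ⊢
        rw [h, Matrix.single_mul_single_same, mul_one, if_pos rfl, mul_one]
      · rw [if_neg h]
        simp [h]

lemma hd_pos_aux (d : ℕ) [NeZero d] : 1 ≤ d := Nat.pos_of_ne_zero (NeZero.ne d)

lemma hneg_aux (d : ℕ) [NeZero d] : ((d - 1 : ℕ) : Fin d) = -1 := by
  rw [Nat.cast_sub (hd_pos_aux d), Fin.natCast_self, Nat.cast_one, zero_sub]

lemma sop_eq_top_aux (d : ℕ) [NeZero d] (idx : Fin d → Fin d) :
    Sop d idx = TopKraus d (fun l => idx (l - 1)) := by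
  unfold Sop TopKraus
  refine Finset.sum_congr rfl fun j _ => ?_
  have hlist : ((List.finRange d).map (fun k => Emat d (j + k) (idx (j + k))))
      = (List.range d).map (fun k : ℕ =>
          Matrix.single (j + (k : Fin d)) (idx (j + (k : Fin d))) (1:ℂ)) := by
    rw [← show (List.finRange d).map (fun i : Fin d => (i : ℕ)) = List.range d from
      List.ext_getElem (by simp) (by simp), List.map_map]
    refine List.map_congr_left fun k _ => ?_
    simp [Function.comp, Emat, Fin.cast_val_eq_self]
  rw [hlist, prod_std_aux d (fun k => j + (k : Fin d)) (fun k => idx (j + (k : Fin d))) d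
    (hd_pos_aux d)]
  rw [Matrix.smul_kronecker]
  have h0 : j + ((0:ℕ) : Fin d) = j := by simp
  have hm1 : j + (((d-1:ℕ)) : Fin d) = j - 1 := by
    rw [hneg_aux, sub_eq_add_neg]
  rw [h0, hm1]
  congr 1
  · -- scalar equality
    refine Finset.prod_bij (fun k _ => j + (k : Fin d) + 1) ?_ ?_ ?_ ?_
    · intro k hk
      simp only [Finset.mem_erase, Finset.mem_univ, and_true]
      intro hcontra
      have h1 : (k : Fin d) + 1 = 0 := by
        have := hcontra
        rwa [add_assoc, add_eq_left] at this
      have h2 : (((k+1:ℕ)) : Fin d) = 0 := by push_cast; exact h1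
      have h3 : ((k+1) % d : ℕ) = 0 := by
        have := congrArg Fin.val h2
        rwa [Fin.val_natCast, Fin.val_zero] at this
      have hk' : k < d - 1 := Finset.mem_range.mp hk
      rw [Nat.mod_eq_of_lt (by omega)] at h3
      omega
    · intro k hk k' hk' he
      have he' : j + (k : Fin d) + 1 = j + (k' : Fin d) + 1 := he
      have : (k : Fin d) = (k' : Fin d) := add_left_cancel (add_right_cancel he')
      have := congrArg Fin.val this
      rw [Fin.val_natCast, Fin.val_natCast] at this
      have hk1 := Finset.mem_range.mp hk
      have hk2 := Finset.mem_range.mp hk'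
      rw [Nat.mod_eq_of_lt (by omega), Nat.mod_eq_of_lt (by omega)] at this
      exact this
    · intro l hl
      refine ⟨(l - j - 1).val, ?_, ?_⟩
      · rw [Finset.mem_range]
        have hlt : (l - j - 1).val < d := (l - j - 1).isLt
        have hne : (l - j - 1).val ≠ d - 1 := by
          intro hval
          have : l - j - 1 = -1 := by
            rw [← Fin.cast_val_eq_self (l - j - 1), hval, hneg_aux]
          have h2 : l = j := by
            have := congrArg (· + 1 + j) this
            simpa [sub_add_cancel] using this
          exact (Finset.mem_erase.mp hl).1 h2
        omega
      · show j + (((l - j - 1).val : ℕ) : Fin d) + 1 = l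
        rw [Fin.cast_val_eq_self]
        ring
    · intro k hk
      have e1 : (j + (k:Fin d) + 1) - 1 = j + (k:Fin d) := by ring
      have e2 : (((k+1:ℕ)) : Fin d) = (k:Fin d) + 1 := by push_cast; ring
      simp only [e1, e2, add_assoc]
      rw [show j + ((k:Fin d) + 1) - 1 = j + (k:Fin d) by ring]

/-- controlled choice and controlled order of the `d` information-erasing
channels define the same channel `K`. -/
theorem stmt_3 (d : ℕ) [NeZero d] (ρ : Matrix (Fin d × Fin d) (Fin d × Fin d) ℂ) :
    ∑ idx : Fin d → Fin d, TopKraus d idx * ρ * (TopKraus d idx)ᴴ =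
      ∑ idx : Fin d → Fin d, Sop d idx * ρ * (Sop d idx)ᴴ := by
  symm
  simp_rw [sop_eq_top_aux]
  exact Fintype.sum_equiv (Equiv.arrowCongr (Equiv.addRight (1:Fin d)) (Equiv.refl _))
    _ _ (fun idx => by
      have : (Equiv.arrowCongr (Equiv.addRight (1:Fin d)) (Equiv.refl (Fin d))) idx
          = fun l => idx (l - 1) := by
        funext l
        simp [Equiv.arrowCongr, sub_eq_add_neg]
      rw [this])
end

section
/- (Lemma 1 of the Supplemental Material.) Let d ≥ 1, D ≥ 1, let ρ* be a density matrix on ℂ^D ⊗ ℂ^d, and for each x ∈ Fin d let (A_{x,i})_{i∈Fin m} be a Kraus family encoding from ℂ^D to ℂ^d; set ρ_x := Σ_{i∈Fin m} (A_{x,i} ⊗ I_d) ρ* (A_{x,i} ⊗ I_d)†. Suppose there are unit vectors Φ_0,…,Φ_{d−1} ∈ ℂ^d ⊗ ℂ^d, pairwise orthogonal, such that K(ρ_x) = Φ_x Φ_x† for every x ∈ Fin d. Then each Φ_x lies in the span of the vectors e_j ⊗ e_j (i.e., P_0 Φ_x = Φ_x) and |⟨e_j ⊗ e_j, Φ_x⟩|²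 = 1/d for all j, x ∈ Fin d; that is, every output state Φ_x is maximally entangled. -/
open Matrix Kronecker BigOperators Complex
open scoped ComplexOrder

/-- The channel `K(ρ) = P₀ ρ P₀ + Σ_j Σ_{l≠j} ρ((l,j),(l,j)) |jj⟩⟨jj|`. -/
noncomputable def Kch (d : ℕ) (ρ : Matrix (Fin d × Fin d) (Fin d × Fin d) ℂ) :
    Matrix (Fin d × Fin d) (Fin d × Fin d) ℂ :=
  P0 d * ρ * P0 d +
    ∑ j : Fin d, ∑ l ∈ Finset.univ.filter (fun l : Fin d => l ≠ j),
      ρ (l, j) (l, j) • (Emat d j j ⊗ₖ Emat d j j)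

/-- Standard basis vector `e_j` of `ℂ^d`. -/
noncomputable def eVec (d : ℕ) (j : Fin d) : Fin d → ℂ := fun i => if i = j then 1 else 0

/-- The vector `e_j ⊗ e_j ∈ ℂ^d ⊗ ℂ^d`. -/
noncomputable def ejj (d : ℕ) (j : Fin d) : Fin d × Fin d → ℂ :=
  fun p => eVec d j p.1 * eVec d j p.2

/-- The encoded state `ρ_x = Σ_i (A_{x,i} ⊗ I) ρ* (A_{x,i} ⊗ I)†`. -/
noncomputable def encode (d D m : ℕ) (A : Fin d → Fin m → Matrix (Fin d) (Fin D) ℂ)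
    (ρ : Matrix (Fin D × Fin d) (Fin D × Fin d) ℂ) (x : Fin d) :
    Matrix (Fin d × Fin d) (Fin d × Fin d) ℂ :=
  ∑ i : Fin m, (A x i ⊗ₖ (1 : Matrix (Fin d) (Fin d) ℂ)) * ρ *
    (A x i ⊗ₖ (1 : Matrix (Fin d) (Fin d) ℂ))ᴴ

lemma P0_apply (d : ℕ) (p q : Fin d × Fin d) :
    P0 d p q = if p.1 = p.2 ∧ q = p then 1 else 0 := by
  simp only [P0, Emat, Matrix.sum_apply, kroneckerMap_apply, Matrix.single,
    Matrix.of_apply]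
  rcases p with ⟨a,b⟩; rcases q with ⟨c,e⟩
  simp only [ite_mul, one_mul, zero_mul]
  rw [show (∑ x : Fin d, if x = a ∧ x = c then if x = b ∧ x = e then (1:ℂ) else 0 else 0)
      = ∑ x : Fin d, if x = a then (if a = c ∧ x = b ∧ x = e then (1:ℂ) else 0) else 0 from
    Finset.sum_congr rfl (by intro x _; by_cases h : x = a <;> aesop)]
  rw [Finset.sum_ite_eq' Finset.univ a]
  simp only [Finset.mem_univ, if_true, Prod.ext_iff]
  aesop

lemma P0_mul_apply (d : ℕ) (ρ : Matrix (Fin d × Fin d) (Fin d × Fin d) ℂ)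
    (p q : Fin d × Fin d) :
    (P0 d * ρ * P0 d) p q =
      if p.1 = p.2 ∧ q.1 = q.2 then ρ p q else 0 := by
  by_cases hp : p.1 = p.2 <;> by_cases hq : q.1 = q.2 <;>
    simp [Matrix.mul_apply, P0_apply, hp, hq, ite_and, Finset.sum_ite_eq,
      Finset.sum_ite_eq'] <;>
  · rw [Finset.sum_congr rfl (fun x _ =>
      show _ = if q = x then (if x.1 = x.2 then ρ p x else 0) else 0 from by
        by_cases h1 : x.1 = x.2 <;> by_cases h2 : q = x <;> simp [h1, h2])]
    simp [Finset.sum_ite_eq, hq]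

lemma Kch_offdiag (d : ℕ) (ρ : Matrix (Fin d × Fin d) (Fin d × Fin d) ℂ)
    (p q : Fin d × Fin d) (hp : p.1 ≠ p.2) : Kch d ρ p q = 0 := by
  simp only [Kch, Matrix.add_apply, P0_mul_apply, hp, false_and, if_false, zero_add,
    Matrix.sum_apply, Matrix.smul_apply, kroneckerMap_apply, Emat,
    Matrix.single, Matrix.of_apply]
  refine Finset.sum_eq_zero fun j _ => Finset.sum_eq_zero fun l _ => ?_
  by_cases h1 : j = p.1 <;> by_cases h2 : j = p.2 <;> simp_all

lemma Kch_diag (d : ℕ) (ρ : Matrix (Fin d × Fin d) (Fin d × Fin d) ℂ) (j : Fin d) :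
    Kch d ρ (j, j) (j, j) = ∑ l : Fin d, ρ (l, j) (l, j) := by
  simp only [Kch, Matrix.add_apply, P0_mul_apply]
  simp only [Matrix.sum_apply, Matrix.smul_apply, kroneckerMap_apply, Emat,
    Matrix.single, Matrix.of_apply]
  simp only [ite_and, smul_eq_mul, mul_ite, mul_one, mul_zero]
  rw [show (∑ j' : Fin d, ∑ l ∈ Finset.univ.filter (fun l : Fin d => l ≠ j'),
      (if j' = j then if j' = j then (if j' = j then if j' = j then ρ (l, j') (l, j') else 0 else 0) else 0 else 0))
    = ∑ j' : Fin d, (if j' = j then ∑ l ∈ Finset.univ.filter (fun l : Fin d => l ≠ j), ρ (l, j) (l, j) else 0) from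
    Finset.sum_congr rfl (by intro x _; by_cases h : x = j <;> simp [h])]
  rw [Finset.sum_ite_eq' Finset.univ j]
  simp only [Finset.mem_univ, if_true]
  have hsplit := Finset.sum_filter_add_sum_filter_not Finset.univ
    (fun l : Fin d => l ≠ j) (fun l => ρ (l, j) (l, j))
  have h2 : Finset.univ.filter (fun l : Fin d => ¬ l ≠ j) = {j} := by ext l; simp
  rw [← hsplit, h2, Finset.sum_singleton, add_comm]

lemma encode_diag_sum (d D m : ℕ) (A : Fin d → Fin m → Matrix (Fin d) (Fin D) ℂ)
    (ρ : Matrix (Fin D × Fin d) (Fin D × Fin d) ℂ) (x : Fin d)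
    (hA : ∑ i : Fin m, (A x i)ᴴ * A x i = 1) (j : Fin d) :
    ∑ l : Fin d, encode d D m A ρ x (l, j) (l, j) = ∑ a : Fin D, ρ (a, j) (a, j) := by
  have key : ∀ c a : Fin D, (∑ i : Fin m, ∑ l : Fin d,
      (starRingEnd ℂ) (A x i l c) * A x i l a) = if c = a then 1 else 0 := by
    intro c a
    have h := congrArg (fun M => M c a) (hA)
    simpa [Matrix.sum_apply, Matrix.mul_apply, Matrix.one_apply,
      Matrix.conjTranspose_apply] using h
  have hterm : ∀ (i : Fin m) (l : Fin d),
      ((A x i ⊗ₖ (1 : Matrix (Fin d) (Fin d) ℂ)) * ρ *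
        (A x i ⊗ₖ (1 : Matrix (Fin d) (Fin d) ℂ))ᴴ) (l, j) (l, j)
      = ∑ a : Fin D, ∑ c : Fin D,
          A x i l a * ρ (a, j) (c, j) * (starRingEnd ℂ) (A x i l c) := by
    intro i l
    simp only [Matrix.mul_apply, Matrix.conjTranspose_apply, kroneckerMap_apply,
      Matrix.one_apply, Fintype.sum_prod_type, mul_ite, ite_mul, mul_one, one_mul,
      mul_zero, zero_mul, Finset.sum_ite_eq,
      Finset.sum_ite_eq', Finset.mem_univ, if_true, Finset.sum_mul, Finset.mul_sum,
      apply_ite (star : ℂ → ℂ), star_zero]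
    simp only [mul_ite, mul_zero, Finset.sum_ite_eq', Finset.mem_univ, if_true,
      RCLike.star_def]
    rw [Finset.sum_comm]
  have step1 : ∑ l : Fin d, encode d D m A ρ x (l, j) (l, j)
      = ∑ l : Fin d, ∑ i : Fin m, ∑ a : Fin D, ∑ c : Fin D,
          A x i l a * ρ (a, j) (c, j) * (starRingEnd ℂ) (A x i l c) := by
    simp only [encode, Matrix.sum_apply]
    exact Finset.sum_congr rfl fun l _ => Finset.sum_congr rfl fun i _ => hterm i l
  have big : (∑ l : Fin d, ∑ i : Fin m, ∑ a : Fin D, ∑ c : Fin D,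
        A x i l a * ρ (a, j) (c, j) * (starRingEnd ℂ) (A x i l c))
      = ∑ a : Fin D, ∑ c : Fin D, ∑ i : Fin m, ∑ l : Fin d,
          A x i l a * ρ (a, j) (c, j) * (starRingEnd ℂ) (A x i l c) := by
    have h1 : (∑ l : Fin d, ∑ i : Fin m, ∑ a : Fin D, ∑ c : Fin D,
          A x i l a * ρ (a, j) (c, j) * (starRingEnd ℂ) (A x i l c))
        = ∑ p : Fin d × Fin m, ∑ q : Fin D × Fin D,
            A x p.2 p.1 q.1 * ρ (q.1, j) (q.2, j) * (starRingEnd ℂ) (A x p.2 p.1 q.2) := by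
      simp only [Fintype.sum_prod_type]
    have h2 : (∑ a : Fin D, ∑ c : Fin D, ∑ i : Fin m, ∑ l : Fin d,
          A x i l a * ρ (a, j) (c, j) * (starRingEnd ℂ) (A x i l c))
        = ∑ q : Fin D × Fin D, ∑ i : Fin m, ∑ l : Fin d,
            A x i l q.1 * ρ (q.1, j) (q.2, j) * (starRingEnd ℂ) (A x i l q.2) := by
      simp only [Fintype.sum_prod_type]
    rw [h1, Finset.sum_comm, h2]
    refine Finset.sum_congr rfl fun q _ => ?_
    rw [Fintype.sum_prod_type, Finset.sum_comm]
  have inner : ∀ a c : Fin D, (∑ i : Fin m, ∑ l : Fin d,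
        A x i l a * ρ (a, j) (c, j) * (starRingEnd ℂ) (A x i l c))
      = ρ (a, j) (c, j) * if c = a then 1 else 0 := by
    intro a c
    rw [← key c a, Finset.mul_sum]
    refine Finset.sum_congr rfl fun i _ => ?_
    rw [Finset.mul_sum]
    exact Finset.sum_congr rfl fun l _ => by ring
  rw [step1, big]
  simp only [inner, mul_ite, mul_one, mul_zero]
  exact Finset.sum_congr rfl fun a _ => by
    rw [Finset.sum_ite_eq' Finset.univ a (fun c => ρ (a, j) (c, j))]
    simp

/-- Lemma 1: if a perfect transmission protocol through the controlled order
of `d` information-erasing channels produces pure orthogonal outputs `Φ_x`, then each `Φ_x`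
lies in the decoherence-free subspace and is maximally entangled. -/
theorem stmt_7 (d D m : ℕ) [NeZero d] [NeZero D]
    (ρstar : Matrix (Fin D × Fin d) (Fin D × Fin d) ℂ)
    (hpos : ρstar.PosSemidef) (htr : ρstar.trace = 1)
    (A : Fin d → Fin m → Matrix (Fin d) (Fin D) ℂ)
    (hA : ∀ x : Fin d, ∑ i : Fin m, (A x i)ᴴ * A x i = 1)
    (Φ : Fin d → (Fin d × Fin d → ℂ))
    (hΦ : ∀ x y : Fin d, star (Φ x) ⬝ᵥ Φ y = if x = y then 1 else 0)
    (hK : ∀ x : Fin d, Kch d (encode d D m A ρstar x) = vecMulVec (Φ x) (star (Φ x))) :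
    ∀ x : Fin d, (P0 d).mulVec (Φ x) = Φ x ∧
      ∀ j : Fin d, ‖star (ejj d j) ⬝ᵥ Φ x‖ ^ 2 = 1 / (d : ℝ) := by
  -- support: Φ x vanishes off the diagonal
  have hsupp : ∀ (x : Fin d) (p : Fin d × Fin d), p.1 ≠ p.2 → Φ x p = 0 := by
    intro x p hp
    have h := congrArg (fun M => M p p) (hK x)
    simp only [Kch_offdiag d _ p p hp, vecMulVec_apply, Pi.star_apply] at h
    have h2 : ((Complex.normSq (Φ x p) : ℝ) : ℂ) = 0 := by
      rw [← Complex.mul_conj]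
      simpa [RCLike.star_def] using h.symm
    exact Complex.normSq_eq_zero.mp (by exact_mod_cast h2)
  -- diagonal magnitudes
  have hdiag : ∀ (x j : Fin d),
      Φ x (j, j) * (starRingEnd ℂ) (Φ x (j, j)) = ∑ a : Fin D, ρstar (a, j) (a, j) := by
    intro x j
    have h := congrArg (fun M => M (j, j) (j, j)) (hK x)
    simp only [Kch_diag, vecMulVec_apply, Pi.star_apply, RCLike.star_def] at h
    rw [← h, encode_diag_sum d D m A ρstar x (hA x) j]
  -- the matrix of diagonal coefficients is unitary
  set U : Matrix (Fin d) (Fin d) ℂ := Matrix.of (fun x j => Φ x (j, j)) with hUdef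
  have hdot : ∀ x y : Fin d, (∑ j : Fin d, (starRingEnd ℂ) (Φ y (j, j)) * Φ x (j, j))
      = if y = x then 1 else 0 := by
    intro x y
    rw [← hΦ y x]
    simp only [dotProduct, Pi.star_apply, Fintype.sum_prod_type, RCLike.star_def]
    rw [Finset.sum_congr rfl (fun a _ =>
      show (∑ b : Fin d, (starRingEnd ℂ) (Φ y (a, b)) * Φ x (a, b))
        = ∑ b : Fin d, if b = a then (starRingEnd ℂ) (Φ y (a, a)) * Φ x (a, a) else 0 from
      Finset.sum_congr rfl fun b _ => by
        by_cases hb : b = a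
        · subst hb; simp
        · simp [hb, hsupp x (a, b) (Ne.symm hb), hsupp y (a, b) (Ne.symm hb)])]
    simp [Finset.sum_ite_eq']
  have hU : U * Uᴴ = 1 := by
    ext x y
    simp only [Matrix.mul_apply, Matrix.conjTranspose_apply, Matrix.one_apply, hUdef,
      Matrix.of_apply, RCLike.star_def]
    rw [show (∑ j : Fin d, Φ x (j, j) * (starRingEnd ℂ) (Φ y (j, j)))
        = ∑ j : Fin d, (starRingEnd ℂ) (Φ y (j, j)) * Φ x (j, j) from
      Finset.sum_congr rfl fun j _ => by ring]
    rw [hdot x y]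
    by_cases h : x = y <;> simp [h, eq_comm]
  have hU' : Uᴴ * U = 1 := mul_eq_one_comm.mp hU
  -- column normalization gives the value of the diagonal probabilities
  have hcol : ∀ j : Fin d, (∑ a : Fin D, ρstar (a, j) (a, j)) = ((d : ℂ))⁻¹ := by
    intro j
    have h := congrArg (fun M => M j j) hU'
    simp only [Matrix.mul_apply, Matrix.conjTranspose_apply, Matrix.one_apply, hUdef,
      Matrix.of_apply, if_pos rfl, RCLike.star_def, if_true, ite_true] at h
    have h2 : (∑ x : Fin d, Φ x (j, j) * (starRingEnd ℂ) (Φ x (j, j))) = 1 := by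
      rw [← h]
      exact Finset.sum_congr rfl fun x _ => by ring
    rw [Finset.sum_congr rfl (fun x (_ : x ∈ Finset.univ) => hdiag x j)] at h2
    rw [Finset.sum_const, Finset.card_univ, Fintype.card_fin, nsmul_eq_mul] at h2
    have hd : (d : ℂ) ≠ 0 := Nat.cast_ne_zero.mpr (NeZero.ne d)
    field_simp at h2 ⊢
    linear_combination h2
  intro x
  constructor
  · -- P0 fixes Φ x
    funext p
    have : (P0 d).mulVec (Φ x) p = if p.1 = p.2 then Φ x p else 0 := by
      simp only [Matrix.mulVec, dotProduct, P0_apply, ite_and, ite_mul, one_mul, zero_mul]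
      by_cases hp : p.1 = p.2
      · simp [hp, Finset.sum_ite_eq]
      · simp [hp]
    rw [this]
    by_cases hp : p.1 = p.2
    · simp [hp]
    · simp [hp, hsupp x p hp]
  · intro j
    have hip : star (ejj d j) ⬝ᵥ Φ x = Φ x (j, j) := by
      simp only [dotProduct, Pi.star_apply, ejj, eVec, Fintype.sum_prod_type,
        apply_ite (star : ℂ → ℂ), star_one, star_zero, mul_ite, ite_mul, one_mul,
        zero_mul, mul_one, mul_zero, star_mul']
      simp [Finset.sum_ite_eq, Finset.sum_ite_eq']
    rw [hip]
    have h1 : ((Complex.normSq (Φ x (j, j)) : ℝ) : ℂ) = ((d : ℂ))⁻¹ := by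
      rw [← Complex.mul_conj, hdiag x j, hcol j]
    have h2 : Complex.normSq (Φ x (j, j)) = ((d : ℝ))⁻¹ := by
      apply Complex.ofReal_inj.mp
      rw [Complex.ofReal_inv, h1]
      push_cast
      ring
    rw [Complex.sq_norm, h2, one_div]
end

section
/- Let d ≥ 2, let ρ be a density matrix on ℂ^d ⊗ ℂ^d, and let Φ ∈ ℂ^d ⊗ ℂ^d be a unit vector with P_0 Φ = Φ and |⟨e_j ⊗ e_j, Φ⟩|² = 1/d for every j ∈ Fin d (a maximally entangled vector in the decoherence-free subspace). If K(ρ) = Φ Φ†, then ρ = Φ Φ†. -/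
open Matrix Kronecker BigOperators Complex
open scoped ComplexOrder

lemma P0_eq (d : ℕ) :
    P0 d = Matrix.diagonal (fun p : Fin d × Fin d => if p.1 = p.2 then 1 else 0) := by
  ext ⟨a,b⟩ ⟨c,e⟩
  simp only [P0, Emat, Matrix.sum_apply, Matrix.kroneckerMap_apply, Matrix.single,
    Matrix.of_apply, Matrix.diagonal, Prod.ext_iff, ite_and, mul_ite, ite_mul, one_mul, mul_one,
    mul_zero, zero_mul, Finset.sum_ite_eq, Finset.sum_ite_eq', Finset.mem_univ, if_true]
  by_cases h1 : a = b <;> by_cases h2 : a = c <;> by_cases h3 : b = e <;> simp_all <;> aesop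

lemma quadE (d : ℕ) (j : Fin d) (w : Fin d × Fin d → ℂ) :
    star w ⬝ᵥ (Emat d j j ⊗ₖ Emat d j j) *ᵥ w = star (w (j,j)) * w (j,j) := by
  simp only [dotProduct, Matrix.mulVec, Emat, Matrix.kroneckerMap_apply,
    Matrix.single, Matrix.of_apply, Pi.star_apply, ite_and, mul_ite, ite_mul,
    one_mul, mul_one, mul_zero, zero_mul, Fintype.sum_prod_type]
  simp [Finset.sum_ite_eq, Finset.sum_ite_eq']

lemma starejj_dot (d : ℕ) (j : Fin d) (Φ : Fin d × Fin d → ℂ) :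
    star (ejj d j) ⬝ᵥ Φ = Φ (j, j) := by
  simp only [dotProduct, ejj, eVec, Pi.star_apply, Fintype.sum_prod_type]
  simp [apply_ite (star : ℂ → ℂ), Finset.sum_ite_eq, Finset.sum_ite_eq']

lemma dot_starejj (d : ℕ) (j : Fin d) (Φ : Fin d × Fin d → ℂ) :
    star Φ ⬝ᵥ ejj d j = star (Φ (j, j)) := by
  simp only [dotProduct, ejj, eVec, Pi.star_apply, Fintype.sum_prod_type]
  simp [Finset.sum_ite_eq, Finset.sum_ite_eq']

lemma quad_sum {n ι : Type*} [Fintype n] (s : Finset ι) (f : ι → Matrix n n ℂ) (w : n → ℂ) :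
    star w ⬝ᵥ (∑ i ∈ s, f i) *ᵥ w = ∑ i ∈ s, star w ⬝ᵥ (f i) *ᵥ w := by
  classical
  induction s using Finset.induction_on with
  | empty => simp
  | insert _ _ h ih =>
      rw [Finset.sum_insert h, Finset.sum_insert h, Matrix.add_mulVec,
        dotProduct_add, ih]

lemma star_single {n : Type*} [DecidableEq n] (p : n) :
    star (Pi.single p (1:ℂ)) = (Pi.single p 1 : n → ℂ) := by
  funext q
  simp [Pi.single_apply, apply_ite (star : ℂ → ℂ)]

/-- if `K(ρ) = ΦΦ†` for a maximally entangled `Φ` in the decoherence-free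
subspace, then `ρ = ΦΦ†`. -/
theorem stmt_8 (d : ℕ) [NeZero d] (hd : 2 ≤ d)
    (ρ : Matrix (Fin d × Fin d) (Fin d × Fin d) ℂ)
    (hpos : ρ.PosSemidef) (htr : ρ.trace = 1)
    (Φ : Fin d × Fin d → ℂ)
    (hunit : star Φ ⬝ᵥ Φ = 1)
    (hspan : (P0 d).mulVec Φ = Φ)
    (hmax : ∀ j : Fin d, ‖star (ejj d j) ⬝ᵥ Φ‖ ^ 2 = 1 / (d : ℝ))
    (hK : Kch d ρ = vecMulVec Φ (star Φ)) :
    ρ = vecMulVec Φ (star Φ) := by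
  have hP0 : P0 d = Matrix.diagonal (fun p : Fin d × Fin d => if p.1 = p.2 then 1 else 0) :=
    P0_eq d
  have hP0H : (P0 d)ᴴ = P0 d := by
    rw [hP0]
    ext p q
    by_cases h : q = p
    · subst h
      simp [Matrix.conjTranspose_apply, Matrix.diagonal_apply_eq, apply_ite (star : ℂ → ℂ)]
    · rw [Matrix.conjTranspose_apply, Matrix.diagonal_apply_ne _ h,
        Matrix.diagonal_apply_ne _ (Ne.symm h), star_zero]
  have hdiagnn : ∀ p, 0 ≤ ρ p p := by
    intro p
    have h := hpos.dotProduct_mulVec_nonneg (Pi.single p 1)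
    rwa [star_single, Matrix.mulVec_single, single_dotProduct, one_mul, MulOpposite.op_one, one_smul] at h
  have key : ∀ j l : Fin d, l ≠ j → ρ (l, j) (l, j) = 0 := by
    intro j l hlj
    set c : ℂ := star (Φ (j, j)) with hc
    set w : Fin d × Fin d → ℂ := fun p => ejj d j p - c * Φ p with hw
    have horth : star Φ ⬝ᵥ w = 0 := by
      have h1 : star Φ ⬝ᵥ w = star Φ ⬝ᵥ ejj d j - c * (star Φ ⬝ᵥ Φ) := by
        simp only [hw, dotProduct, Finset.mul_sum]
        rw [← Finset.sum_sub_distrib]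
        exact Finset.sum_congr rfl fun p _ => by ring
      rw [h1, dot_starejj, hunit, mul_one, hc, sub_self]
    have hnsq : c * Φ (j, j) = ((1 / (d:ℝ) : ℝ) : ℂ) := by
      have hm := hmax j
      rw [starejj_dot] at hm
      calc c * Φ (j, j) = (starRingEnd ℂ) (Φ (j, j)) * Φ (j, j) := by rw [hc]; rfl
        _ = (Complex.normSq (Φ (j, j)) : ℂ) := Complex.normSq_eq_conj_mul_self.symm
        _ = ((1 / (d:ℝ) : ℝ) : ℂ) := by rw [← Complex.sq_norm, hm]
    have hwjj : w (j, j) = 1 - ((1 / (d:ℝ) : ℝ) : ℂ) := by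
      have : w (j, j) = ejj d j (j, j) - c * Φ (j, j) := rfl
      rw [this, hnsq]
      simp [ejj, eVec]
    have hwne : w (j, j) ≠ 0 := by
      rw [hwjj]
      intro h
      rw [sub_eq_zero] at h
      have h1 : (1:ℝ) = 1 / (d:ℝ) := by exact_mod_cast h
      have hd2 : (2:ℝ) ≤ (d:ℝ) := by exact_mod_cast hd
      have hdne : (d:ℝ) ≠ 0 := by positivity
      field_simp at h1
      linarith
    have hq := congrArg (fun M => star w ⬝ᵥ M *ᵥ w) hK
    beta_reduce at hq
    have hrhs : star w ⬝ᵥ (vecMulVec Φ (star Φ)) *ᵥ w = 0 := by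
      have hmv : (vecMulVec Φ (star Φ)) *ᵥ w = fun p => Φ p * (star Φ ⬝ᵥ w) := by
        funext p
        simp [Matrix.mulVec, Matrix.vecMulVec_apply, dotProduct, Finset.mul_sum, mul_assoc]
      rw [hmv]
      simp [horth]
    rw [hrhs] at hq
    rw [Kch, Matrix.add_mulVec, dotProduct_add, quad_sum] at hq
    have hq1 : 0 ≤ star w ⬝ᵥ (P0 d * ρ * P0 d) *ᵥ w := by
      have hps : (P0 d * ρ * P0 d).PosSemidef := by
        have h := hpos.mul_mul_conjTranspose_same (P0 d)
        rwa [hP0H] at h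
      exact hps.dotProduct_mulVec_nonneg w
    have hterm : ∀ j' : Fin d, ∀ l' ∈ Finset.univ.filter (fun l : Fin d => l ≠ j'),
        (0:ℂ) ≤ ρ (l', j') (l', j') * (star (w (j', j')) * w (j', j')) := by
      intro j' l' _
      exact mul_nonneg (hdiagnn _) (star_mul_self_nonneg _)
    have hsum : (∑ j' : Fin d, star w ⬝ᵥ
        (∑ l ∈ Finset.univ.filter (fun l : Fin d => l ≠ j'),
          ρ (l, j') (l, j') • (Emat d j' j' ⊗ₖ Emat d j' j')) *ᵥ w)
        = ∑ j' : Fin d, ∑ l ∈ Finset.univ.filter (fun l : Fin d => l ≠ j'),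
            ρ (l, j') (l, j') * (star (w (j', j')) * w (j', j')) := by
      refine Finset.sum_congr rfl fun j' _ => ?_
      rw [quad_sum]
      refine Finset.sum_congr rfl fun l' _ => ?_
      rw [Matrix.smul_mulVec, dotProduct_smul, quadE]
      simp [smul_eq_mul]
    rw [hsum] at hq
    set S : ℂ := ∑ j' : Fin d, ∑ l ∈ Finset.univ.filter (fun l : Fin d => l ≠ j'),
        ρ (l, j') (l, j') * (star (w (j', j')) * w (j', j')) with hS
    have hSnn : 0 ≤ S := Finset.sum_nonneg fun j' _ => Finset.sum_nonneg (hterm j')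
    have hS0 : S = 0 := by
      have h1 : S = -(star w ⬝ᵥ (P0 d * ρ * P0 d) *ᵥ w) := by linear_combination hq
      have h2 : S ≤ 0 := h1 ▸ neg_nonpos.mpr hq1
      exact le_antisymm h2 hSnn
    have hall := (Finset.sum_eq_zero_iff_of_nonneg
      (fun j' _ => Finset.sum_nonneg (hterm j'))).mp hS0
    have hj := hall j (Finset.mem_univ j)
    have hl := (Finset.sum_eq_zero_iff_of_nonneg (hterm j)).mp hj l (by simp [hlj])
    rcases mul_eq_zero.mp hl with h | h
    · exact h
    · exact absurd h (mul_ne_zero (star_ne_zero.mpr hwne) hwne)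
  have hcol : ∀ p : Fin d × Fin d, p.1 ≠ p.2 → ∀ q, ρ q p = 0 := by
    rintro ⟨a, b⟩ hp q
    have hd0 : ρ (a, b) (a, b) = 0 := key b a hp
    have h1 : star (Pi.single ((a, b) : Fin d × Fin d) (1:ℂ)) ⬝ᵥ ρ *ᵥ Pi.single (a, b) 1
        = ρ (a, b) (a, b) := by
      rw [star_single, Matrix.mulVec_single, single_dotProduct, one_mul, MulOpposite.op_one, one_smul]
      rfl
    have h2 := (hpos.dotProduct_mulVec_zero_iff (Pi.single (a, b) 1)).mp (by rw [h1, hd0])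
    have h3 := congrFun h2 q
    simpa using h3
  have hrow : ∀ p : Fin d × Fin d, p.1 ≠ p.2 → ∀ q, ρ p q = 0 := by
    intro p hp q
    have h := hpos.1.apply q p
    calc ρ p q = star (star (ρ p q)) := (star_star _).symm
      _ = star (ρ q p) := by rw [h]
      _ = 0 := by rw [hcol p hp q, star_zero]
  have hfix : Kch d ρ = ρ := by
    rw [Kch]
    have h2 : (∑ j : Fin d, ∑ l ∈ Finset.univ.filter (fun l : Fin d => l ≠ j),
        ρ (l, j) (l, j) • (Emat d j j ⊗ₖ Emat d j j)) = 0 := by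
      refine Finset.sum_eq_zero fun j _ => Finset.sum_eq_zero fun l hl => ?_
      rw [key j l (by simpa using hl)]
      simp
    rw [h2, add_zero, hP0]
    ext p q
    rw [Matrix.mul_diagonal, Matrix.diagonal_mul]
    by_cases hp : p.1 = p.2 <;> by_cases hq2 : q.1 = q.2
    · simp [hp, hq2]
    · simp [hp, hq2, hrow q hq2 p, hcol q hq2 p]
    · simp [hp, hq2, hrow p hp q]
    · simp [hp, hq2, hrow p hp q]
  rw [← hfix, hK]
end

section
/- (Lemma 2 of the Supplemental Material, concrete form.) Let d ≥ 2, D ≥ 1, let ρ* be a density matrix on ℂ^D ⊗ ℂ^d, and for each x ∈ Fin d let (A_{x,i})_{i∈Fin m} be a Kraus family encoding from ℂ^D to ℂ^d; set ρ_x := Σ_{i∈Fin m} (A_{x,i} ⊗ I_d) ρ* (A_{x,i} ⊗ I_d)†. Suppose there are pairwise orthogonal unit vectors Φ_0,…,Φ_{d−1} ∈ ℂ^d ⊗ ℂ^d with K(ρ_x) = Φ_x Φ_x† for every x ∈ Fin d (perfect transmission of a classical dit through the controlled order of d information-erasing channels). Then for every x ∈ Fin d, ρ_x = Φ_x Φ_x†,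 and each Φ_x satisfies P_0 Φ_x = Φ_x and |⟨e_j ⊗ e_j, Φ_x⟩|² = 1/d for all j; in particular every encoded state ρ_x is a d-dimensional maximally entangled pure state. -/
open Matrix Kronecker BigOperators Complex
open scoped ComplexOrder

/-! ### Auxiliary lemmas -/

lemma Emat_apply (d : ℕ) (j i a b : Fin d) :
    Emat d j i a b = if j = a ∧ i = b then 1 else 0 := by
  simp [Emat, Matrix.single]

lemma P0_eq_diag (d : ℕ) :
    P0 d = Matrix.diagonal (fun p : Fin d × Fin d => if p.1 = p.2 then (1:ℂ) else 0) := by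
  ext ⟨a,b⟩ ⟨c,e⟩
  simp only [P0, Matrix.sum_apply, Matrix.kroneckerMap_apply, Emat_apply,
    Matrix.diagonal_apply, Prod.mk.injEq]
  rw [Finset.sum_eq_single a (by aesop) (by simp)]
  by_cases h : a = b <;> by_cases h2 : a = c <;> by_cases h3 : a = e <;> aesop

lemma Kch_apply (d : ℕ) (ρ : Matrix (Fin d × Fin d) (Fin d × Fin d) ℂ)
    (a b c e : Fin d) :
    Kch d ρ (a,b) (c,e) =
      (if a = b then 1 else 0) * ρ (a,b) (c,e) * (if c = e then 1 else 0) +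
      (if a = b ∧ a = c ∧ a = e then
        ∑ l ∈ Finset.univ.filter (fun l : Fin d => l ≠ a), ρ (l, a) (l, a) else 0) := by
  simp only [Kch, Matrix.add_apply, P0_eq_diag, Matrix.diagonal_mul, Matrix.mul_diagonal,
    Matrix.sum_apply, Matrix.smul_apply, Matrix.kroneckerMap_apply, Emat_apply, smul_eq_mul]
  congr 1
  rw [Finset.sum_eq_single a (by aesop) (by simp)]
  by_cases h : a = b <;> by_cases h2 : a = c <;> by_cases h3 : a = e <;> aesop

lemma compress_sandwich {d D : ℕ} (B : Matrix (Fin d) (Fin D) ℂ)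
    (ρ : Matrix (Fin D × Fin d) (Fin D × Fin d) ℂ) (j : Fin d) :
    (Matrix.of fun l l' => ((B ⊗ₖ (1 : Matrix (Fin d) (Fin d) ℂ)) * ρ *
        (B ⊗ₖ (1 : Matrix (Fin d) (Fin d) ℂ))ᴴ) (l,j) (l',j)) =
      B * (Matrix.of fun p q => ρ (p,j) (q,j)) * Bᴴ := by
  ext l l'
  simp only [Matrix.mul_apply, Matrix.conjTranspose_apply, Matrix.kroneckerMap_apply,
    Matrix.one_apply, Fintype.sum_prod_type, Matrix.of_apply, mul_ite, ite_mul,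
    zero_mul, mul_zero, apply_ite (star : ℂ → ℂ), star_zero,
    Finset.sum_ite_eq', Finset.sum_ite_eq, Finset.mem_univ, if_true, mul_one, one_mul]

lemma encode_partial_trace {d D m : ℕ} (A : Fin d → Fin m → Matrix (Fin d) (Fin D) ℂ)
    (ρ : Matrix (Fin D × Fin d) (Fin D × Fin d) ℂ) (x : Fin d)
    (hAx : ∑ i : Fin m, (A x i)ᴴ * A x i = 1) (j : Fin d) :
    (∑ l : Fin d, encode d D m A ρ x (l,j) (l,j)) = ∑ p : Fin D, ρ (p,j) (p,j) := by
  have h1 : (∑ l : Fin d, encode d D m A ρ x (l,j) (l,j)) =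
      ∑ i : Fin m, Matrix.trace (A x i * (Matrix.of fun p q => ρ (p,j) (q,j)) * (A x i)ᴴ) := by
    simp only [encode, Matrix.sum_apply, Matrix.trace, Matrix.diag]
    rw [Finset.sum_comm]
    refine Finset.sum_congr rfl fun i _ => Finset.sum_congr rfl fun l _ => ?_
    have := congrFun (congrFun (compress_sandwich (A x i) ρ j) l) l
    simpa using this
  rw [h1]
  have h2 : ∀ i : Fin m, Matrix.trace (A x i * (Matrix.of fun p q => ρ (p,j) (q,j)) * (A x i)ᴴ)
      = Matrix.trace ((A x i)ᴴ * A x i * (Matrix.of fun p q => ρ (p,j) (q,j))) := by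
    intro i
    rw [Matrix.trace_mul_cycle]
  simp only [h2]
  rw [← Matrix.trace_sum]
  rw [← Finset.sum_mul, hAx, one_mul]
  rfl

lemma encode_posSemidef {d D m : ℕ} (A : Fin d → Fin m → Matrix (Fin d) (Fin D) ℂ)
    (ρ : Matrix (Fin D × Fin d) (Fin D × Fin d) ℂ) (hρ : ρ.PosSemidef) (x : Fin d) :
    (encode d D m A ρ x).PosSemidef := by
  unfold encode
  refine Finset.sum_induction _ Matrix.PosSemidef
    (fun a b ha hb => ha.add hb) (Matrix.PosSemidef.zero) (fun i _ => ?_)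
  exact hρ.mul_mul_conjTranspose_same _

lemma diag_sum_collapse {d : ℕ} (f : Fin d × Fin d → ℂ)
    (h : ∀ p : Fin d × Fin d, p.1 ≠ p.2 → f p = 0) :
    ∑ p : Fin d × Fin d, f p = ∑ j : Fin d, f (j,j) := by
  rw [Fintype.sum_prod_type]
  refine Finset.sum_congr rfl fun a _ => ?_
  rw [Finset.sum_eq_single a (fun b _ hb => h (a,b) (Ne.symm hb)) (by simp)]

lemma quad_two {n : Type*} [Fintype n] [DecidableEq n] (M : Matrix n n ℂ) (p q : n)
    (hpq : p ≠ q) (a b : ℂ) :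
    star (Pi.single p a + Pi.single q b) ⬝ᵥ M.mulVec (Pi.single p a + Pi.single q b)
    = star a * M p p * a + star a * M p q * b + star b * M q p * a + star b * M q q * b := by
  simp only [star_add, ← Pi.single_star, Matrix.mulVec_add, Matrix.mulVec_single,
    dotProduct_add, add_dotProduct, single_dotProduct, Pi.add_apply, Pi.smul_apply,
    MulOpposite.smul_eq_mul_unop, MulOpposite.unop_op, Matrix.col_apply]
  ring

lemma psd_diag_nonneg {n : Type*} [Fintype n] [DecidableEq n] {M : Matrix n n ℂ}
    (hM : M.PosSemidef) (p : n) : 0 ≤ M p p := by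
  simpa [Matrix.mulVec_single, ← Pi.single_star, single_dotProduct]
    using hM.dotProduct_mulVec_nonneg (Pi.single p 1)

lemma psd_offdiag_zero {n : Type*} [Fintype n] [DecidableEq n] {M : Matrix n n ℂ}
    (hM : M.PosSemidef) {p q : n} (hpq : p ≠ q) (hpp : M p p = 0) : M p q = 0 := by
  by_contra hm
  set m := M p q with hmdef
  have hns : 0 < Complex.normSq m := by
    simpa [Complex.normSq_pos] using hm
  set s : ℝ := -(((M q q).re + 1) / Complex.normSq m) with hs
  have hq := quad_two M p q hpq ((s:ℂ) * m) 1
  have hquad := hM.dotProduct_mulVec_nonneg (Pi.single p ((s:ℂ) * m) + Pi.single q 1)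
  rw [hq] at hquad
  have hherm : M q p = star m := by
    rw [hmdef, ← hM.1.apply p q, star_star]
  rw [hpp, hherm] at hquad
  have hexp : star ((s:ℂ) * m) * 0 * ((s:ℂ) * m) + star ((s:ℂ) * m) * m * 1 +
      star (1:ℂ) * star m * ((s:ℂ) * m) + star (1:ℂ) * M q q * 1
      = 2 * (s:ℂ) * (Complex.normSq m : ℂ) + M q q := by
    have h1 : star ((s:ℂ) * m) = (s:ℂ) * star m := by
      simp [Complex.star_def, _root_.map_mul, Complex.conj_ofReal]
    rw [h1]
    have h2 : star m * m = (Complex.normSq m : ℂ) := by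
      rw [Complex.star_def, mul_comm, Complex.mul_conj]
    simp only [star_one, one_mul, mul_one, mul_zero, zero_mul, zero_add]
    linear_combination (2*(s:ℂ)) * h2
  rw [hexp] at hquad
  rw [Complex.le_def] at hquad
  obtain ⟨hre, -⟩ := hquad
  have hrecalc : (2*(s:ℂ)*(Complex.normSq m : ℂ) + M q q).re
      = 2*s*Complex.normSq m + (M q q).re := by
    simp [Complex.add_re, Complex.mul_re]
  rw [hrecalc] at hre
  have hqq : 0 ≤ (M q q).re := by
    have := psd_diag_nonneg hM q
    rw [Complex.le_def] at this
    simpa using this.1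
  have hval : 2*s*Complex.normSq m = -2*((M q q).re + 1) := by
    rw [hs]
    field_simp
  rw [hval] at hre
  simp only [Complex.zero_re] at hre
  linarith

/-- Lemma 2, concrete form: a perfect transmission of a classical dit through
the controlled order of `d` information-erasing channels forces every encoded state `ρ_x` to
be the maximally entangled pure state `Φ_x Φ_x†`, with `Φ_x` in the decoherence-free
subspace and `|⟨e_j ⊗ e_j, Φ_x⟩|² = 1/d`. -/
theorem stmt_9 (d D m : ℕ) [NeZero d] [NeZero D] (hd : 2 ≤ d)
    (ρstar : Matrix (Fin D × Fin d) (Fin D × Fin d) ℂ)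
    (hpos : ρstar.PosSemidef) (htr : ρstar.trace = 1)
    (A : Fin d → Fin m → Matrix (Fin d) (Fin D) ℂ)
    (hA : ∀ x : Fin d, ∑ i : Fin m, (A x i)ᴴ * A x i = 1)
    (Φ : Fin d → (Fin d × Fin d → ℂ))
    (hΦ : ∀ x y : Fin d, star (Φ x) ⬝ᵥ Φ y = if x = y then 1 else 0)
    (hK : ∀ x : Fin d, Kch d (encode d D m A ρstar x) = vecMulVec (Φ x) (star (Φ x))) :
    ∀ x : Fin d, encode d D m A ρstar x = vecMulVec (Φ x) (star (Φ x)) ∧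
      (P0 d).mulVec (Φ x) = Φ x ∧
      ∀ j : Fin d, ‖star (ejj d j) ⬝ᵥ Φ x‖ ^ 2 = 1 / (d : ℝ) := by
  haveI : Nontrivial (Fin d) := Fin.nontrivial_iff_two_le.mpr hd
  set σ : Fin d → ℂ := fun j => ∑ p : Fin D, ρstar (p,j) (p,j) with hσdef
  -- off-diagonal components of every Φ y vanish
  have hoff : ∀ y : Fin d, ∀ p : Fin d × Fin d, p.1 ≠ p.2 → Φ y p = 0 := by
    intro y p hp
    have h := congrFun (congrFun (hK y) p) p
    obtain ⟨a,b⟩ := p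
    replace hp : a ≠ b := hp
    rw [Kch_apply] at h
    simp only [Matrix.vecMulVec_apply, Pi.star_apply, if_neg hp, hp, false_and, if_false,
      zero_mul, mul_zero, add_zero, zero_add] at h
    have h0 : Complex.normSq (Φ y (a,b)) = 0 := by
      have := h.symm
      rw [Complex.star_def, Complex.mul_conj] at this
      exact_mod_cast this
    exact Complex.normSq_eq_zero.mp h0
  -- diagonal sum rule : Φ y (j,j) * star (Φ y (j,j)) = σ j
  have hB : ∀ y j : Fin d, Φ y (j,j) * star (Φ y (j,j)) = σ j := by
    intro y j
    have h := congrFun (congrFun (hK y) (j,j)) (j,j)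
    rw [Kch_apply] at h
    simp only [if_pos rfl, and_self, if_true, one_mul, mul_one,
      Matrix.vecMulVec_apply, Pi.star_apply] at h
    have hsum : encode d D m A ρstar y (j,j) (j,j) +
        ∑ l ∈ Finset.univ.filter (fun l : Fin d => l ≠ j),
          encode d D m A ρstar y (l,j) (l,j)
        = ∑ l : Fin d, encode d D m A ρstar y (l,j) (l,j) := by
      rw [Finset.filter_ne']
      exact Finset.add_sum_erase Finset.univ
        (fun l => encode d D m A ρstar y (l,j) (l,j)) (Finset.mem_univ j)
    calc Φ y (j,j) * star (Φ y (j,j)) = _ := h.symm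
      _ = ∑ l : Fin d, encode d D m A ρstar y (l,j) (l,j) := hsum
      _ = σ j := encode_partial_trace A ρstar y (hA y) j
  -- the matrix of diagonal components is unitary
  have hσval : ∀ j : Fin d, σ j = (d:ℂ)⁻¹ := by
    have hUU : (Matrix.of fun y j : Fin d => Φ y (j,j)) *
        (Matrix.of fun y j : Fin d => Φ y (j,j))ᴴ = 1 := by
      ext y z
      simp only [Matrix.mul_apply, Matrix.conjTranspose_apply, Matrix.of_apply,
        Matrix.one_apply]
      have h : ∑ p : Fin d × Fin d, star (Φ z p) * Φ y p = if z = y then 1 else 0 := by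
        simpa [dotProduct, Pi.star_apply] using hΦ z y
      rw [diag_sum_collapse (fun p => star (Φ z p) * Φ y p)
        (fun p hp => by simp [hoff z p hp])] at h
      rw [show (∑ j : Fin d, Φ y (j,j) * star (Φ z (j,j)))
          = ∑ j : Fin d, star (Φ z (j,j)) * Φ y (j,j) from
          Finset.sum_congr rfl fun j _ => mul_comm _ _, h]
      by_cases hyz : y = z <;> simp [hyz, eq_comm]
    have hU2 := mul_eq_one_comm.mp hUU
    intro j
    have hcol := congrFun (congrFun hU2 j) j
    simp only [Matrix.mul_apply, Matrix.conjTranspose_apply, Matrix.of_apply,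
      Matrix.one_apply_eq] at hcol
    have hsum : (∑ y : Fin d, σ j) = 1 := by
      rw [← hcol]
      exact Finset.sum_congr rfl fun y _ => ((mul_comm _ _).trans (hB y j)).symm
    rw [Finset.sum_const, Finset.card_univ, Fintype.card_fin, nsmul_eq_mul] at hsum
    have hd0 : (d:ℂ) ≠ 0 := by
      exact_mod_cast Nat.cast_ne_zero.mpr (NeZero.ne d)
    field_simp at hsum ⊢
    linear_combination hsum
  -- now fix x
  intro x
  have hpsd := encode_posSemidef A ρstar hpos x
  have hherm := hpsd.1
  have hdiagsum : ∀ j : Fin d, encode d D m A ρstar x (j,j) (j,j) +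
      ∑ l ∈ Finset.univ.erase j, encode d D m A ρstar x (l,j) (l,j) = σ j := by
    intro j
    exact (Finset.add_sum_erase Finset.univ
      (fun l => encode d D m A ρstar x (l,j) (l,j)) (Finset.mem_univ j)).trans
      (encode_partial_trace A ρstar x (hA x) j)
  have hf2 : ∀ j k : Fin d, j ≠ k →
      encode d D m A ρstar x (j,j) (k,k) = Φ x (j,j) * star (Φ x (k,k)) := by
    intro j k hjk
    have h := congrFun (congrFun (hK x) (j,j)) (k,k)
    rw [Kch_apply] at h
    simpa [hjk, Matrix.vecMulVec_apply, Pi.star_apply] using h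
  -- the residual sums vanish
  have hR0 : ∀ j : Fin d, ∑ l ∈ Finset.univ.erase j,
      encode d D m A ρstar x (l,j) (l,j) = 0 := by
    have hRnn : ∀ j : Fin d, 0 ≤ ∑ l ∈ Finset.univ.erase j,
        encode d D m A ρstar x (l,j) (l,j) :=
      fun j => Finset.sum_nonneg fun l _ => psd_diag_nonneg hpsd (l,j)
    have key : ∀ j k : Fin d, j ≠ k →
        (∑ l ∈ Finset.univ.erase j, encode d D m A ρstar x (l,j) (l,j)) +
        (∑ l ∈ Finset.univ.erase k, encode d D m A ρstar x (l,k) (l,k)) ≤ 0 := by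
      intro j k hjk
      have hpq : ((j,j) : Fin d × Fin d) ≠ (k,k) := by simp [hjk]
      have hquad := hpsd.dotProduct_mulVec_nonneg (Pi.single ((j,j) : Fin d × Fin d) (Φ x (j,j)) +
        Pi.single ((k,k) : Fin d × Fin d) (-Φ x (k,k)))
      rw [quad_two _ _ _ hpq] at hquad
      rw [hf2 j k hjk, hf2 k j hjk.symm] at hquad
      have hval : star (Φ x (j,j)) * encode d D m A ρstar x (j,j) (j,j) * Φ x (j,j) +
          star (Φ x (j,j)) * (Φ x (j,j) * star (Φ x (k,k))) * -Φ x (k,k) +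
          star (-Φ x (k,k)) * (Φ x (k,k) * star (Φ x (j,j))) * Φ x (j,j) +
          star (-Φ x (k,k)) * encode d D m A ρstar x (k,k) (k,k) * -Φ x (k,k)
          = σ j * encode d D m A ρstar x (j,j) (j,j) +
            σ k * encode d D m A ρstar x (k,k) (k,k) - 2 * (σ j * σ k) := by
        rw [← hB x j, ← hB x k]
        simp only [star_neg]
        ring
      rw [hval] at hquad
      have hρjj := hdiagsum j
      have hρkk := hdiagsum k
      have hs := hσval j
      have hsk := hσval k
      -- rewrite: σ j * (σ j - R j) + σ k * (σ k - R k) - 2 σ j σ k = -(σ j (R j + R k))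
      have hfin : σ j * encode d D m A ρstar x (j,j) (j,j) +
          σ k * encode d D m A ρstar x (k,k) (k,k) - 2 * (σ j * σ k)
          = -((d:ℂ)⁻¹ * ((∑ l ∈ Finset.univ.erase j, encode d D m A ρstar x (l,j) (l,j)) +
              (∑ l ∈ Finset.univ.erase k, encode d D m A ρstar x (l,k) (l,k)))) := by
        rw [hs] at hρjj ⊢
        rw [hsk] at hρkk ⊢
        linear_combination ((d:ℂ)⁻¹) * hρjj + ((d:ℂ)⁻¹) * hρkk
      rw [hfin] at hquad
      -- conclude in the reals
      have hRj := hRnn j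
      have hRk := hRnn k
      rw [Complex.le_def] at hquad hRj hRk ⊢
      simp only [Complex.zero_re, Complex.zero_im, Complex.add_re, Complex.add_im,
        Complex.neg_re, Complex.neg_im, Complex.mul_re, Complex.mul_im] at hquad hRj hRk ⊢
      obtain ⟨hRj1, hRj2⟩ := hRj
      obtain ⟨hRk1, hRk2⟩ := hRk
      obtain ⟨hq1, -⟩ := hquad
      have hdinv : (0:ℝ) < ((d:ℂ)⁻¹).re := by
        rw [show ((d:ℂ)⁻¹) = (((d:ℝ)⁻¹ : ℝ) : ℂ) by push_cast; ring]
        simp only [Complex.ofReal_re]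
        have : (0:ℝ) < (d:ℝ) := by exact_mod_cast Nat.pos_of_ne_zero (NeZero.ne d)
        positivity
      have hdinvim : ((d:ℂ)⁻¹).im = 0 := by
        rw [show ((d:ℂ)⁻¹) = (((d:ℝ)⁻¹ : ℝ) : ℂ) by push_cast; ring]
        simp
      constructor
      · rw [← hRj2, ← hRk2] at *
        rw [hdinvim] at hq1
        simp only [mul_zero, zero_mul, sub_zero, add_zero] at hq1
        nlinarith
      · linarith [hRj2, hRk2]
    intro j
    obtain ⟨k, hk⟩ := exists_ne j
    have h1 := key j k (Ne.symm hk)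
    have h2 := hRnn j
    have h3 := hRnn k
    have h4 : (∑ l ∈ Finset.univ.erase j, encode d D m A ρstar x (l,j) (l,j)) ≤ 0 := by
      calc (∑ l ∈ Finset.univ.erase j, encode d D m A ρstar x (l,j) (l,j))
          ≤ (∑ l ∈ Finset.univ.erase j, encode d D m A ρstar x (l,j) (l,j)) +
            (∑ l ∈ Finset.univ.erase k, encode d D m A ρstar x (l,k) (l,k)) := by
            exact le_add_of_nonneg_right h3
        _ ≤ 0 := h1
    exact le_antisymm h4 h2
  -- each off-diagonal diagonal entry of ρ_x vanishes
  have hzero_diag : ∀ p : Fin d × Fin d, p.1 ≠ p.2 →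
      encode d D m A ρstar x p p = 0 := by
    rintro ⟨l, j⟩ hp
    replace hp : l ≠ j := hp
    have := hR0 j
    rw [Finset.sum_eq_zero_iff_of_nonneg
      (fun l _ => psd_diag_nonneg hpsd (l,j))] at this
    exact this l (Finset.mem_erase.mpr ⟨hp, Finset.mem_univ l⟩)
  have hzero_row : ∀ p q : Fin d × Fin d, p.1 ≠ p.2 →
      encode d D m A ρstar x p q = 0 := by
    intro p q hp
    by_cases hq : p = q
    · rw [← hq]; exact hzero_diag p hp
    · exact psd_offdiag_zero hpsd hq (hzero_diag p hp)
  refine ⟨?_, ?_, ?_⟩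
  · -- ρ_x = Φ_x Φ_x†
    ext ⟨a,b⟩ ⟨c,e⟩
    rw [Matrix.vecMulVec_apply, Pi.star_apply]
    by_cases hab : a = b
    · by_cases hce : c = e
      · subst hab; subst hce
        by_cases hac : a = c
        · subst hac
          have h := hdiagsum a
          rw [hR0 a, add_zero] at h
          rw [h, ← hB x a]
        · exact hf2 a c hac
      · -- column off-diagonal : use hermiticity
        have h1 : encode d D m A ρstar x (c,e) (a,b) = 0 :=
          hzero_row (c,e) (a,b) hce
        have h2 := hherm.apply (a,b) (c,e)
        rw [h1, star_zero] at h2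
        rw [← h2, hoff x (c,e) hce, star_zero, mul_zero]
    · rw [hzero_row (a,b) (c,e) hab, hoff x (a,b) hab, zero_mul]
  · -- P0 fixes Φ x
    funext p
    rw [P0_eq_diag, Matrix.mulVec_diagonal]
    by_cases hp : p.1 = p.2
    · rw [if_pos hp, one_mul]
    · rw [if_neg hp, zero_mul, hoff x p hp]
  · -- maximal entanglement
    intro j
    have hdot : star (ejj d j) ⬝ᵥ Φ x = Φ x (j,j) := by
      simp only [dotProduct, Pi.star_apply, ejj, eVec, Fintype.sum_prod_type,
        apply_ite (star : ℂ → ℂ), star_one, star_zero, mul_ite, ite_mul, one_mul,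
        zero_mul, mul_zero, mul_one, Finset.sum_ite_eq', Finset.sum_ite_eq,
        Finset.mem_univ, if_true]
    rw [hdot]
    have h := (hB x j).trans (hσval j)
    rw [Complex.star_def, Complex.mul_conj] at h
    have hreal : Complex.normSq (Φ x (j,j)) = (d:ℝ)⁻¹ := by
      have : ((Complex.normSq (Φ x (j,j)) : ℝ) : ℂ) = (((d:ℝ)⁻¹ : ℝ) : ℂ) := by
        rw [h]; push_cast; ring
      exact_mod_cast this
    rw [Complex.sq_norm, hreal, one_div]
end

section
/- (Lemma 3 of the Supplemental Material.) Let d, m ≥ 1 and, for each j ∈ Fin d, let v^{(j)}_0,…,v^{(j)}_{m−1} ∈ ℂ^d satisfy Σ_{i∈Fin m} v^{(j)}_i (v^{(j)}_i)† = I_d; set v_j := v^{(j)}_0. Let T be the controlled-choice channel with Kraus operators T_{i_0,…,i_{d−1}} := Σ_{j∈Fin d} (∏_{l≠j} α_{i_l}) · e_j (v^{(j)}_{i_j})† ⊗ |j⟩⟨j|, where α_0 := 1 and α_i := 0 for i ≠ 0. Then ‖v_j‖ ≤ 1 for every j, and for every matrix ρ on ℂ^d ⊗ ℂ^d, T(ρ)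 := Σ_{(i_0,…,i_{d−1})∈(Fin m)^d} T_{i_0,…,i_{d−1}} ρ T_{i_0,…,i_{d−1}}† = T_{0,…,0} ρ T_{0,…,0}† + Σ_{j∈Fin d} Tr[((I_d − v_j v_j†) ⊗ |j⟩⟨j|) ρ] · |j⟩⟨j| ⊗ |j⟩⟨j|, where T_{0,…,0} = Σ_{j∈Fin d} e_j v_j† ⊗ |j⟩⟨j|. -/
open Matrix Kronecker BigOperators Complex

/-- The controlled-choice Kraus operators `T_{i_0,…,i_{d−1}} =
Σ_j (Π_{l≠j} α_{i_l}) e_j (v^{(j)}_{i_j})† ⊗ |j⟩⟨j|` with `α_0 = 1`, `α_i = 0` for `i ≠ 0`. -/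
noncomputable def Tkraus (d m : ℕ) [NeZero m] (v : Fin d → Fin m → Fin d → ℂ)
    (idx : Fin d → Fin m) : Matrix (Fin d × Fin d) (Fin d × Fin d) ℂ :=
  ∑ j : Fin d, (∏ l ∈ Finset.univ.erase j, (if idx l = 0 then (1 : ℂ) else 0)) •
    (vecMulVec (eVec d j) (star (v j (idx j))) ⊗ₖ Emat d j j)

/- ======================= auxiliary lemmas ======================= -/

lemma rankone_conj {n : Type*} [Fintype n] [DecidableEq n] (u s : n → ℂ) (ρ : Matrix n n ℂ) :
    vecMulVec u (star s) * ρ * (vecMulVec u (star s))ᴴ =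
      (Matrix.trace (vecMulVec s (star s) * ρ)) • vecMulVec u (star u) := by
  rw [Matrix.trace_mul_comm]
  ext p q
  simp only [Matrix.mul_apply, Matrix.trace, Matrix.diag, vecMulVec, Matrix.smul_apply,
    Matrix.conjTranspose_apply, of_apply, Pi.star_apply, Finset.mul_sum, Finset.sum_mul,
    smul_eq_mul, star_mul', star_star, RCLike.star_def]
  conv_rhs => rw [Finset.sum_comm]
  refine Finset.sum_congr rfl fun x _ => Finset.sum_congr rfl fun y _ => by
    simp only [Complex.conj_conj]; ring

lemma kron1 (d : ℕ) (j : Fin d) (w : Fin d → ℂ) :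
    vecMulVec (eVec d j) (star w) ⊗ₖ Emat d j j =
      vecMulVec (ejj d j) (star (fun p : Fin d × Fin d => w p.1 * eVec d j p.2)) := by
  ext ⟨a,b⟩ ⟨c,e⟩
  simp [vecMulVec, Emat, Matrix.single, eVec, ejj, apply_ite (starRingEnd ℂ),
    eq_comm, ite_and]
  split_ifs <;> ring

lemma kron2 (d : ℕ) (j : Fin d) (w : Fin d → ℂ) :
    vecMulVec w (star w) ⊗ₖ Emat d j j =
      vecMulVec (fun p : Fin d × Fin d => w p.1 * eVec d j p.2)
        (star (fun p : Fin d × Fin d => w p.1 * eVec d j p.2)) := by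
  ext ⟨a,b⟩ ⟨c,e⟩
  simp [vecMulVec, Emat, Matrix.single, eVec, ejj, apply_ite (starRingEnd ℂ),
    eq_comm, ite_and]
  split_ifs <;> ring

lemma kron3 (d : ℕ) (j : Fin d) :
    Emat d j j ⊗ₖ Emat d j j = vecMulVec (ejj d j) (star (ejj d j)) := by
  ext ⟨a,b⟩ ⟨c,e⟩
  simp [vecMulVec, Emat, Matrix.single, eVec, ejj, apply_ite (starRingEnd ℂ),
    eq_comm, ite_and]
  split_ifs <;> ring

lemma conj_rankone (d : ℕ) (j : Fin d) (w : Fin d → ℂ)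
    (ρ : Matrix (Fin d × Fin d) (Fin d × Fin d) ℂ) :
    (vecMulVec (eVec d j) (star w) ⊗ₖ Emat d j j) * ρ *
      (vecMulVec (eVec d j) (star w) ⊗ₖ Emat d j j)ᴴ =
    (Matrix.trace ((vecMulVec w (star w) ⊗ₖ Emat d j j) * ρ)) •
      (Emat d j j ⊗ₖ Emat d j j) := by
  rw [kron1, kron2, kron3, rankone_conj]

lemma norm_part (d m : ℕ) [NeZero m] (v : Fin m → Fin d → ℂ)
    (hv : ∑ i : Fin m, vecMulVec (v i) (star (v i)) = (1 : Matrix (Fin d) (Fin d) ℂ)) :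
    Real.sqrt (∑ a : Fin d, ‖v 0 a‖ ^ 2) ≤ 1 := by
  set w := v 0 with hw
  set z : Fin m → ℂ := fun i => ∑ b, (starRingEnd ℂ) (w b) * v i b with hz
  have hE := congrArg (fun M : Matrix (Fin d) (Fin d) ℂ =>
      ∑ a, ∑ b, (starRingEnd ℂ) (w a) * M a b * w b) hv
  simp only [Matrix.sum_apply, Matrix.one_apply, vecMulVec_apply, Pi.star_apply,
    RCLike.star_def, Finset.mul_sum, Finset.sum_mul, mul_ite, mul_zero, ite_mul, zero_mul,
    mul_one, Finset.sum_ite_eq, Finset.mem_univ, if_true] at hE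
  have key : ∑ i, (starRingEnd ℂ) (z i) * z i = ∑ x, (starRingEnd ℂ) (w x) * w x := by
    rw [← hE]
    calc ∑ i, (starRingEnd ℂ) (z i) * z i
        = ∑ i, ∑ x1, ∑ x, (starRingEnd ℂ) (w x) * (v i x * (starRingEnd ℂ) (v i x1)) * w x1 := by
          refine Finset.sum_congr rfl fun i _ => ?_
          simp only [hz, map_sum, _root_.map_mul, Complex.conj_conj, Finset.sum_mul,
            Finset.mul_sum]
          rw [Finset.sum_comm]
          exact Finset.sum_congr rfl fun a _ => Finset.sum_congr rfl fun b _ => by ring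
      _ = ∑ x1, ∑ x, ∑ i, (starRingEnd ℂ) (w x) * (v i x * (starRingEnd ℂ) (v i x1)) * w x1 := by
          rw [Finset.sum_comm]
          exact Finset.sum_congr rfl fun x1 _ => Finset.sum_comm
      _ = ∑ x, ∑ x1, ∑ i, (starRingEnd ℂ) (w x) * (v i x * (starRingEnd ℂ) (v i x1)) * w x1 :=
          Finset.sum_comm
  set S : ℝ := ∑ a, ‖w a‖ ^ 2 with hSdef
  have hSnormSq : S = ∑ a, Complex.normSq (w a) := by
    simp [hSdef, Complex.sq_norm]
  have hz0 : z 0 = (S : ℂ) := by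
    simp only [hz, ← hw, hSnormSq]
    push_cast
    exact Finset.sum_congr rfl fun b _ => (Complex.normSq_eq_conj_mul_self).symm
  have hreal' : S = ∑ i, Complex.normSq (z i) := by
    have hc : ((S : ℝ) : ℂ) = ((∑ i, Complex.normSq (z i) : ℝ) : ℂ) := by
      calc ((S : ℝ) : ℂ) = ∑ x, (starRingEnd ℂ) (w x) * w x := by
            rw [hSnormSq]; push_cast
            exact Finset.sum_congr rfl fun b _ => Complex.normSq_eq_conj_mul_self
        _ = ∑ i, (starRingEnd ℂ) (z i) * z i := key.symm
        _ = ((∑ i, Complex.normSq (z i) : ℝ) : ℂ) := by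
            push_cast
            exact Finset.sum_congr rfl fun i _ => (Complex.normSq_eq_conj_mul_self).symm
    exact_mod_cast hc
  have hS0 : 0 ≤ S := Finset.sum_nonneg fun a _ => sq_nonneg _
  have hle : Complex.normSq (z 0) ≤ S := by
    rw [hreal']
    exact Finset.single_le_sum (fun i _ => Complex.normSq_nonneg _) (Finset.mem_univ 0)
  rw [hz0, Complex.normSq_ofReal] at hle
  have hS1 : S ≤ 1 := by nlinarith
  exact Real.sqrt_le_one.mpr hS1

lemma sum_idx (d m : ℕ) [NeZero m] (j : Fin d) {A : Type*} [AddCommMonoid A] (g : Fin m → A) :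
    ∑ idx : Fin d → Fin m, (if ∀ l, l ≠ j → idx l = 0 then g (idx j) else 0) = ∑ i, g i := by
  rw [← Equiv.sum_comp (Equiv.funSplitAt j (Fin m)).symm]
  rw [Fintype.sum_prod_type]
  simp only [Equiv.funSplitAt_symm_apply, dite_true]
  refine Finset.sum_congr rfl fun x _ => ?_
  have hcond : ∀ r : {l // l ≠ j} → Fin m,
      (∀ l : Fin d, l ≠ j → (if h : l = j then x else r ⟨l, h⟩) = 0) ↔ r = fun _ => 0 := by
    intro r
    constructor
    · intro h
      funext s
      have := h s.1 s.2
      rwa [dif_neg s.2] at this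
    · rintro rfl l hl
      rw [dif_neg hl]
  rw [Finset.sum_congr rfl fun r _ => if_congr (hcond r) rfl rfl,
    Finset.sum_ite_eq' Finset.univ (fun _ => (0 : Fin m)) (fun _ => g x)]
  simp

lemma sum_idx0 (d m : ℕ) [NeZero m] {A : Type*} [AddCommMonoid A]
    (g : (Fin d → Fin m) → A) :
    ∑ idx : Fin d → Fin m, (if idx = (fun _ => 0) then g idx else 0) = g (fun _ => 0) := by
  rw [Finset.sum_ite_eq' Finset.univ (fun _ => (0 : Fin m)) g]
  simp

lemma hT (d m : ℕ) [NeZero m] (v : Fin d → Fin m → Fin d → ℂ) (idx : Fin d → Fin m) :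
    Tkraus d m v idx = ∑ j : Fin d, (if ∀ l, l ≠ j → idx l = 0 then (1:ℂ) else 0) •
      (vecMulVec (eVec d j) (star (v j (idx j))) ⊗ₖ Emat d j j) := by
  unfold Tkraus
  refine Finset.sum_congr rfl fun j _ => ?_
  rw [Finset.prod_boole]
  congr 1
  simp [Finset.mem_erase]

lemma expand (d m : ℕ) [NeZero m] (v : Fin d → Fin m → Fin d → ℂ)
    (ρ : Matrix (Fin d × Fin d) (Fin d × Fin d) ℂ) (idx : Fin d → Fin m) :
    Tkraus d m v idx * ρ * (Tkraus d m v idx)ᴴ =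
      ∑ j : Fin d, ∑ k : Fin d,
        ((if ∀ l, l ≠ j → idx l = 0 then (1:ℂ) else 0) *
         (if ∀ l, l ≠ k → idx l = 0 then (1:ℂ) else 0)) •
        ((vecMulVec (eVec d j) (star (v j (idx j))) ⊗ₖ Emat d j j) * ρ *
         (vecMulVec (eVec d k) (star (v k (idx k))) ⊗ₖ Emat d k k)ᴴ) := by
  rw [hT]
  simp only [Matrix.conjTranspose_sum, Matrix.conjTranspose_smul, Finset.sum_mul,
    Finset.mul_sum, Finset.smul_sum, smul_mul_assoc, mul_smul_comm, smul_smul,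
    apply_ite (star : ℂ → ℂ), star_one, star_zero, RCLike.star_def]
  rw [Finset.sum_comm]
  refine Finset.sum_congr rfl fun j _ => Finset.sum_congr rfl fun k _ => ?_
  rw [mul_comm]

lemma sum_kron {d : ℕ} {ι : Type*} (s : Finset ι) (f : ι → Matrix (Fin d) (Fin d) ℂ)
    (B : Matrix (Fin d) (Fin d) ℂ) :
    (∑ i ∈ s, f i) ⊗ₖ B = ∑ i ∈ s, f i ⊗ₖ B := by
  ext ⟨a,b⟩ ⟨c,e⟩
  simp [Matrix.sum_apply, Finset.sum_mul]

lemma sub_kron {d : ℕ} (A B C : Matrix (Fin d) (Fin d) ℂ) :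
    (A - B) ⊗ₖ C = A ⊗ₖ C - B ⊗ₖ C := by
  ext ⟨a,b⟩ ⟨c,e⟩
  simp [Matrix.sub_apply, sub_mul]

/-- Lemma 3: structure of the controlled-choice channel. -/
theorem stmt_10 (d m : ℕ) [NeZero d] [NeZero m]
    (v : Fin d → Fin m → Fin d → ℂ)
    (hv : ∀ j : Fin d,
      ∑ i : Fin m, vecMulVec (v j i) (star (v j i)) = (1 : Matrix (Fin d) (Fin d) ℂ)) :
    (∀ j : Fin d, Real.sqrt (∑ a : Fin d, ‖v j 0 a‖ ^ 2) ≤ 1) ∧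
    (Tkraus d m v (fun _ => 0) =
      ∑ j : Fin d, vecMulVec (eVec d j) (star (v j 0)) ⊗ₖ Emat d j j) ∧
    (∀ ρ : Matrix (Fin d × Fin d) (Fin d × Fin d) ℂ,
      ∑ idx : Fin d → Fin m, Tkraus d m v idx * ρ * (Tkraus d m v idx)ᴴ =
        Tkraus d m v (fun _ => 0) * ρ * (Tkraus d m v (fun _ => 0))ᴴ +
          ∑ j : Fin d,
            (Matrix.trace ((((1 : Matrix (Fin d) (Fin d) ℂ) -
                vecMulVec (v j 0) (star (v j 0))) ⊗ₖ Emat d j j) * ρ)) •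
              (Emat d j j ⊗ₖ Emat d j j)) := by
  refine ⟨fun j => norm_part d m (v j) (hv j), ?_, ?_⟩
  · rw [hT]
    refine Finset.sum_congr rfl fun j _ => ?_
    rw [if_pos (fun l _ => rfl), one_smul]
  intro ρ
  -- abbreviations
  set M : Fin d → Fin m → Matrix (Fin d × Fin d) (Fin d × Fin d) ℂ :=
    fun j i => vecMulVec (eVec d j) (star (v j i)) ⊗ₖ Emat d j j with hM
  -- expand the LHS
  have step1 : ∑ idx : Fin d → Fin m, Tkraus d m v idx * ρ * (Tkraus d m v idx)ᴴ =
      ∑ j : Fin d, ∑ k : Fin d, ∑ idx : Fin d → Fin m,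
        ((if ∀ l, l ≠ j → idx l = 0 then (1:ℂ) else 0) *
         (if ∀ l, l ≠ k → idx l = 0 then (1:ℂ) else 0)) •
        (M j (idx j) * ρ * (M k (idx k))ᴴ) := by
    rw [Finset.sum_congr rfl fun idx _ => expand d m v ρ idx]
    rw [Finset.sum_comm]
    exact Finset.sum_congr rfl fun j _ => Finset.sum_comm
  -- diagonal terms
  have diag : ∀ j : Fin d, ∑ idx : Fin d → Fin m,
      ((if ∀ l, l ≠ j → idx l = 0 then (1:ℂ) else 0) *
       (if ∀ l, l ≠ j → idx l = 0 then (1:ℂ) else 0)) •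
      (M j (idx j) * ρ * (M j (idx j))ᴴ) = ∑ i : Fin m, M j i * ρ * (M j i)ᴴ := by
    intro j
    rw [← sum_idx d m j (fun i => M j i * ρ * (M j i)ᴴ)]
    refine Finset.sum_congr rfl fun idx _ => ?_
    by_cases h : ∀ l, l ≠ j → idx l = 0
    · rw [if_pos h, if_pos h, one_mul, one_smul]
    · rw [if_neg h, if_neg h, zero_mul, zero_smul]
  -- off-diagonal terms
  have offd : ∀ j k : Fin d, k ≠ j → ∑ idx : Fin d → Fin m,
      ((if ∀ l, l ≠ j → idx l = 0 then (1:ℂ) else 0) *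
       (if ∀ l, l ≠ k → idx l = 0 then (1:ℂ) else 0)) •
      (M j (idx j) * ρ * (M k (idx k))ᴴ) = M j 0 * ρ * (M k 0)ᴴ := by
    intro j k hkj
    rw [← sum_idx0 d m (fun idx => M j (idx j) * ρ * (M k (idx k))ᴴ)]
    refine Finset.sum_congr rfl fun idx _ => ?_
    by_cases h : idx = fun _ => 0
    · subst h
      simp
    · rw [if_neg h]
      obtain ⟨l, hl⟩ := Function.ne_iff.mp h
      by_cases hlj : l = j
      · subst hlj
        have hck : ¬(∀ l', l' ≠ k → idx l' = 0) := fun hc => hl (hc l (Ne.symm hkj))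
        rw [if_neg hck, mul_zero, zero_smul]
      · rw [if_neg (fun hc => hl (hc l hlj)), zero_mul, zero_smul]
  -- per-j identity
  have perj : ∀ j : Fin d, ∑ i : Fin m, M j i * ρ * (M j i)ᴴ =
      M j 0 * ρ * (M j 0)ᴴ +
        (Matrix.trace ((((1 : Matrix (Fin d) (Fin d) ℂ) -
          vecMulVec (v j 0) (star (v j 0))) ⊗ₖ Emat d j j) * ρ)) •
          (Emat d j j ⊗ₖ Emat d j j) := by
    intro j
    have h1 : ∀ i : Fin m, M j i * ρ * (M j i)ᴴ =
        (Matrix.trace ((vecMulVec (v j i) (star (v j i)) ⊗ₖ Emat d j j) * ρ)) •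
          (Emat d j j ⊗ₖ Emat d j j) := fun i => conj_rankone d j (v j i) ρ
    rw [Finset.sum_congr rfl fun i _ => h1 i, h1 0]
    rw [← Finset.sum_smul, ← Matrix.trace_sum]
    rw [← Finset.sum_mul, ← sum_kron, hv j]
    rw [sub_kron, Matrix.sub_mul, Matrix.trace_sub, sub_smul]
    abel
  -- assemble
  have hsplit : ∀ (F : Fin d → Fin d → Matrix (Fin d × Fin d) (Fin d × Fin d) ℂ),
      ∑ j : Fin d, ∑ k : Fin d, F j k =
        ∑ j : Fin d, F j j + ∑ j : Fin d, ∑ k ∈ Finset.univ.erase j, F j k := by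
    intro F
    rw [← Finset.sum_add_distrib]
    exact Finset.sum_congr rfl fun j _ => (Finset.add_sum_erase _ _ (Finset.mem_univ j)).symm
  have hRHS : Tkraus d m v (fun _ => 0) * ρ * (Tkraus d m v (fun _ => 0))ᴴ =
      ∑ j : Fin d, ∑ k : Fin d, M j 0 * ρ * (M k 0)ᴴ := by
    rw [expand d m v ρ (fun _ => 0)]
    refine Finset.sum_congr rfl fun j _ => Finset.sum_congr rfl fun k _ => ?_
    rw [if_pos (fun l _ => rfl), if_pos (fun l _ => rfl), one_mul, one_smul]
  rw [step1, hRHS, hsplit, hsplit]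
  rw [Finset.sum_congr rfl fun j _ => diag j]
  rw [Finset.sum_congr rfl fun j (_ : j ∈ Finset.univ) => Finset.sum_congr rfl
    fun k hk => offd j k (Finset.mem_erase.mp hk).1]
  rw [Finset.sum_congr rfl fun j _ => perj j, Finset.sum_add_distrib]
  abel
end

section
/- (Lemma 4 of the Supplemental Material.) Let d ≥ 2, m ≥ 1, and let T be the controlled-choice channel built from families (v^{(j)}_i)_{i∈Fin m} ⊂ ℂ^d with Σ_i v^{(j)}_i (v^{(j)}_i)† = I_d and amplitudes α_0 = 1, α_i = 0 (i ≠ 0); set v_j := v^{(j)}_0. Let ρ be a density matrix on ℂ^d ⊗ ℂ^d and Φ ∈ ℂ^d ⊗ ℂ^d a unit vector lying in the span of the vectors e_j ⊗ e_j with |⟨e_j ⊗ e_j, Φ⟩|² = 1/d for every j (a maximally entangled vector). If T(ρ) = Φ Φ†, then ‖v_j‖ = 1 for every j ∈ Fin d, and ((I_d − v_j v_j†) ⊗ |j⟩⟨j|) · ρ = 0 for every j ∈ Fin d (so ρ is supported on the span of the vectors v_j ⊗ e_j). -/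
open Matrix Kronecker BigOperators Complex
open scoped ComplexOrder

lemma aux_trace_zero {n : Type*} [Fintype n] {M : Matrix n n ℂ}
    (h : (Mᴴ * M).trace = 0) : M = 0 := by
  have h1 : (Mᴴ * M).trace = ∑ j : n, ∑ i : n, (Complex.normSq (M i j) : ℂ) := by
    simp [Matrix.trace, Matrix.diag, Matrix.mul_apply, Matrix.conjTranspose_apply,
      Complex.normSq_eq_conj_mul_self]
  rw [h1] at h
  have h2 : ∑ j : n, ∑ i : n, Complex.normSq (M i j) = 0 := by exact_mod_cast h
  ext i j
  have h3 := (Finset.sum_eq_zero_iff_of_nonneg (fun j _ =>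
    Finset.sum_nonneg fun i _ => Complex.normSq_nonneg _)).mp h2 j (Finset.mem_univ j)
  have h4 := (Finset.sum_eq_zero_iff_of_nonneg (fun i _ =>
    Complex.normSq_nonneg _)).mp h3 i (Finset.mem_univ i)
  simpa using Complex.normSq_eq_zero.mp h4

lemma aux_vecMulVec_mulVec {n : Type*} [Fintype n] (a b x : n → ℂ) :
    (Matrix.vecMulVec a b).mulVec x = (b ⬝ᵥ x) • a := by
  ext p
  simp only [Matrix.mulVec, Matrix.vecMulVec_apply, dotProduct, Pi.smul_apply, smul_eq_mul]
  rw [Finset.sum_mul]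
  exact Finset.sum_congr rfl fun q _ => by ring

lemma aux_trace_mul_vecMulVec {n : Type*} [Fintype n] (ρ : Matrix n n ℂ) (u : n → ℂ) :
    (ρ * Matrix.vecMulVec u (star u)).trace = star u ⬝ᵥ ρ.mulVec u := by
  simp only [Matrix.trace, Matrix.diag, Matrix.mul_apply, Matrix.vecMulVec_apply,
    dotProduct, Matrix.mulVec, Pi.star_apply, Finset.mul_sum]
  exact Finset.sum_congr rfl fun p _ => Finset.sum_congr rfl fun q _ => by
    simp [RCLike.star_def]; ring

lemma aux_pi_sum {d m : ℕ} [NeZero m] [NeZero d] (j : Fin d) (F : Fin m → ℂ) :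
    ∑ idx : Fin d → Fin m, (if ∀ l, l ≠ j → idx l = 0 then F (idx j) else 0)
      = ∑ i : Fin m, F i := by
  classical
  rw [← Finset.sum_filter]
  have himg : Finset.univ.filter (fun idx : Fin d → Fin m => ∀ l, l ≠ j → idx l = 0)
      = Finset.image (fun i : Fin m => fun l => if l = j then i else 0) Finset.univ := by
    ext idx
    simp only [Finset.mem_filter, Finset.mem_univ, true_and, Finset.mem_image]
    constructor
    · intro h
      refine ⟨idx j, funext fun l => ?_⟩
      by_cases hl : l = j
      · simp [hl]
      · simp [hl, h l hl]
    · rintro ⟨i, rfl⟩ l hl; simp [hl]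
  rw [himg, Finset.sum_image]
  · simp
  · intro x _ y _ h
    have := congrFun h j
    simpa using this

lemma aux_pi_sum0 {d m : ℕ} [NeZero m] [NeZero d] (F : (Fin d → Fin m) → ℂ) :
    ∑ idx : Fin d → Fin m, (if ∀ l, idx l = 0 then F idx else 0) = F (fun _ => 0) := by
  classical
  have : ∀ idx : Fin d → Fin m, (if ∀ l, idx l = 0 then F idx else 0)
      = (if idx = (fun _ => 0) then F idx else 0) := by
    intro idx
    congr 1
    simp [funext_iff]
  rw [Finset.sum_congr rfl fun idx _ => this idx]
  simp


lemma aux_sum_mulVec {n ι : Type*} [Fintype n] [Fintype ι] (M : ι → Matrix n n ℂ)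
    (x : n → ℂ) : (∑ i, M i).mulVec x = ∑ i, (M i).mulVec x := by
  ext p
  simp only [Matrix.mulVec, dotProduct, Matrix.sum_apply, Finset.sum_apply, Finset.sum_mul]
  exact Finset.sum_comm

lemma aux_dot_sum {n ι : Type*} [Fintype n] [Fintype ι] (x : n → ℂ) (y : ι → n → ℂ) :
    x ⬝ᵥ (∑ i, y i) = ∑ i, x ⬝ᵥ y i := by
  simp only [dotProduct, Finset.sum_apply, Finset.mul_sum]
  exact Finset.sum_comm

lemma aux_conj_dot {n : Type*} [Fintype n] (x w : n → ℂ) :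
    star x ⬝ᵥ w = (starRingEnd ℂ) (star w ⬝ᵥ x) := by
  simp only [dotProduct, map_sum, _root_.map_mul, Pi.star_apply, RCLike.star_def,
    Complex.conj_conj]
  exact Finset.sum_congr rfl fun a _ => by ring

lemma aux_mulVec_lincomb {n ι : Type*} [Fintype n] [Fintype ι] (C : Matrix n n ℂ)
    (c : ι → ℂ) (b : ι → n → ℂ) :
    C.mulVec (∑ a, c a • b a) = ∑ a, c a • C.mulVec (b a) := by
  ext p
  simp only [Matrix.mulVec, dotProduct, Finset.sum_apply, Pi.smul_apply, smul_eq_mul,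
    Finset.mul_sum]
  rw [Finset.sum_comm]
  refine Finset.sum_congr rfl fun a _ => ?_
  exact Finset.sum_congr rfl fun q _ => by ring

lemma aux_kron_conjT {n : Type*} [Fintype n] (X Y : Matrix n n ℂ) :
    ((X ⊗ₖ Y))ᴴ = Xᴴ ⊗ₖ Yᴴ := by
  ext p q
  simp [Matrix.conjTranspose_apply, Matrix.kroneckerMap_apply]

lemma aux_vecMulVec_conjT {n : Type*} [Fintype n] (v : n → ℂ) :
    (Matrix.vecMulVec v (star v))ᴴ = Matrix.vecMulVec v (star v) := by
  ext a b
  simp only [Matrix.conjTranspose_apply, Matrix.vecMulVec_apply, Pi.star_apply,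
    RCLike.star_def, _root_.map_mul, Complex.conj_conj]
  ring

section TEST
variable (d m : ℕ) [NeZero d] [NeZero m]
  (v : Fin d → Fin m → Fin d → ℂ)
  (ρ : Matrix (Fin d × Fin d) (Fin d × Fin d) ℂ) (Φ' : Fin d × Fin d → ℂ)

noncomputable def uu (j : Fin d) (i : Fin m) : Fin d × Fin d → ℂ :=
  fun p => v j i p.1 * (if p.2 = j then 1 else 0)

noncomputable def cc (idx : Fin d → Fin m) (j : Fin d) : ℂ :=
  ∏ l ∈ Finset.univ.erase j, (if idx l = 0 then (1 : ℂ) else 0)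

lemma hrow (idx : Fin d → Fin m) (j : Fin d) (r : Fin d × Fin d) :
    Tkraus d m v idx (j, j) r
      = cc d m idx j * ((starRingEnd ℂ) (v j (idx j) r.1) * if r.2 = j then 1 else 0) := by
  rw [Tkraus, Matrix.sum_apply]
  rw [Finset.sum_eq_single j]
  · simp only [Matrix.smul_apply, Matrix.kroneckerMap_apply, Matrix.vecMulVec_apply,
      Pi.star_apply, RCLike.star_def, Emat, Matrix.single, Matrix.of_apply, eVec,
      smul_eq_mul, cc]
    by_cases h : r.2 = j
    · simp [h]
    · simp [h, if_neg (fun hh : j = r.2 => h hh.symm)]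
  · intro b _ hb
    simp [Matrix.vecMulVec_apply, eVec, Ne.symm hb]
  · simp

lemma hcstar (idx : Fin d → Fin m) (j : Fin d) :
    (starRingEnd ℂ) (cc d m idx j) = cc d m idx j := by
  rw [cc, map_prod]
  exact Finset.prod_congr rfl fun l _ => by simp [apply_ite]

lemma hentry (idx : Fin d → Fin m) (j k : Fin d) :
    (Tkraus d m v idx * ρ * (Tkraus d m v idx)ᴴ) (j, j) (k, k)
      = cc d m idx j * cc d m idx k *
        (star (uu d m v j (idx j)) ⬝ᵥ ρ.mulVec (uu d m v k (idx k))) := by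
  simp only [Matrix.mul_apply, Matrix.conjTranspose_apply, hrow]
  simp only [dotProduct, Matrix.mulVec, Pi.star_apply, RCLike.star_def, uu,
    Finset.mul_sum, Finset.sum_mul]
  rw [Finset.sum_comm]
  refine Finset.sum_congr rfl fun r _ => Finset.sum_congr rfl fun s _ => ?_
  simp only [_root_.map_mul, hcstar, Complex.conj_conj, apply_ite (starRingEnd ℂ),
    _root_.map_one, _root_.map_zero]
  split_ifs <;> ring


set_option linter.unusedSectionVars false

lemma hkey (hT : ∑ idx : Fin d → Fin m, Tkraus d m v idx * ρ * (Tkraus d m v idx)ᴴ =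
      vecMulVec Φ' (star Φ')) (j k : Fin d) :
    Φ' (j, j) * (starRingEnd ℂ) (Φ' (k, k))
      = if j = k then ∑ i : Fin m, star (uu d m v j i) ⬝ᵥ ρ.mulVec (uu d m v j i)
        else star (uu d m v j 0) ⬝ᵥ ρ.mulVec (uu d m v k 0) := by
  have h0 : (vecMulVec Φ' (star Φ')) (j, j) (k, k)
      = Φ' (j, j) * (starRingEnd ℂ) (Φ' (k, k)) := by
    simp [Matrix.vecMulVec_apply, RCLike.star_def]
  rw [← h0, ← hT, Matrix.sum_apply]
  simp only [hentry]
  by_cases hjk : j = k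
  · subst hjk
    rw [if_pos rfl]
    rw [Finset.sum_congr rfl (fun idx _ => ?_) , aux_pi_sum j
      (fun i => star (uu d m v j i) ⬝ᵥ ρ.mulVec (uu d m v j i))]
    rw [cc, Finset.prod_boole]
    have hcond : (∀ l ∈ Finset.univ.erase j, idx l = 0) ↔ ∀ l, l ≠ j → idx l = 0 := by
      simp [Finset.mem_erase]
    simp only [hcond]
    split_ifs with h <;> ring
  · rw [if_neg hjk]
    rw [Finset.sum_congr rfl (fun idx _ => ?_), aux_pi_sum0
      (fun idx => star (uu d m v j (idx j)) ⬝ᵥ ρ.mulVec (uu d m v k (idx k)))]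
    by_cases h1 : ∀ l, idx l = 0
    · rw [if_pos h1, cc, cc]
      simp [h1]
    · rw [if_neg h1]
      push_neg at h1
      obtain ⟨l, hl⟩ := h1
      by_cases hlj : l = j
      · have : cc d m idx k = 0 := by
          rw [cc]
          refine Finset.prod_eq_zero (Finset.mem_erase.mpr ⟨hlj ▸ hjk, Finset.mem_univ l⟩) ?_
          rw [if_neg hl]
        rw [this]; ring
      · have : cc d m idx j = 0 := by
          rw [cc]
          refine Finset.prod_eq_zero (Finset.mem_erase.mpr ⟨hlj, Finset.mem_univ l⟩) ?_
          rw [if_neg hl]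
        rw [this]; ring

lemma hquad (w w' : Fin d → ℂ) (j k : Fin d) :
    star (fun p : Fin d × Fin d => w p.1 * (if p.2 = j then (1:ℂ) else 0)) ⬝ᵥ
      ρ.mulVec (fun p : Fin d × Fin d => w' p.1 * (if p.2 = k then (1:ℂ) else 0))
    = ∑ a : Fin d, ∑ b : Fin d, (starRingEnd ℂ) (w a) * (ρ (a, j) (b, k) * w' b) := by
  simp only [dotProduct, Matrix.mulVec, Pi.star_apply, RCLike.star_def, _root_.map_mul,
    apply_ite (starRingEnd ℂ), _root_.map_one, _root_.map_zero, Fintype.sum_prod_type,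
    mul_ite, ite_mul, mul_zero, zero_mul, mul_one, one_mul, Finset.sum_ite_eq',
    Finset.mem_univ, if_true]
  refine Finset.sum_congr rfl fun a _ => ?_
  rw [Finset.mul_sum]

lemma uu_eq (j : Fin d) (i : Fin m) :
    uu d m v j i = fun p : Fin d × Fin d => v j i p.1 * (if p.2 = j then (1:ℂ) else 0) := rfl

lemma hF1 (hv : ∀ j : Fin d,
      ∑ i : Fin m, vecMulVec (v j i) (star (v j i)) = (1 : Matrix (Fin d) (Fin d) ℂ))
    (j : Fin d) :
    ∑ i : Fin m, star (uu d m v j i) ⬝ᵥ ρ.mulVec (uu d m v j i)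
      = ∑ a : Fin d, ρ (a, j) (a, j) := by
  have hv' : ∀ a b : Fin d,
      (∑ i : Fin m, v j i a * (starRingEnd ℂ) (v j i b)) = if a = b then 1 else 0 := by
    intro a b
    have := congrFun (congrFun (hv j) a) b
    simpa [Matrix.sum_apply, Matrix.vecMulVec_apply, Matrix.one_apply, RCLike.star_def]
      using this
  calc ∑ i : Fin m, star (uu d m v j i) ⬝ᵥ ρ.mulVec (uu d m v j i)
      = ∑ i : Fin m, ∑ a : Fin d, ∑ b : Fin d,
          (starRingEnd ℂ) (v j i a) * (ρ (a, j) (b, j) * v j i b) := by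
        exact Finset.sum_congr rfl fun i _ => hquad (d:=d) (ρ:=ρ) (v j i) (v j i) j j
    _ = ∑ a : Fin d, ∑ b : Fin d,
          (∑ i : Fin m, v j i b * (starRingEnd ℂ) (v j i a)) * ρ (a, j) (b, j) := by
        rw [Finset.sum_comm]
        refine Finset.sum_congr rfl fun a _ => ?_
        rw [Finset.sum_comm]
        refine Finset.sum_congr rfl fun b _ => ?_
        rw [Finset.sum_mul]
        exact Finset.sum_congr rfl fun i _ => by ring
    _ = ∑ a : Fin d, ρ (a, j) (a, j) := by
        refine Finset.sum_congr rfl fun a _ => ?_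
        simp only [hv', ite_mul, one_mul, zero_mul, Finset.sum_ite_eq,
          Finset.sum_ite_eq', Finset.mem_univ, if_true]

lemma hPhi (j : Fin d) : star (ejj d j) ⬝ᵥ Φ' = Φ' (j, j) := by
  simp [ejj, eVec, dotProduct, Fintype.sum_prod_type, apply_ite (starRingEnd ℂ), mul_ite,
    ite_mul, mul_zero, zero_mul, one_mul, mul_one, Finset.sum_ite_eq', RCLike.star_def]

noncomputable def gg (C : Matrix (Fin d × Fin d) (Fin d × Fin d) ℂ)
    (x : Fin d × Fin d → ℂ) : EuclideanSpace ℂ (Fin d × Fin d) := WithLp.toLp 2 (C.mulVec x)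

lemma hginner (C : Matrix (Fin d × Fin d) (Fin d × Fin d) ℂ)
    (hC : ρ = Cᴴ * C) (x y : Fin d × Fin d → ℂ) :
    star x ⬝ᵥ ρ.mulVec y = inner ℂ (gg d C x) (gg d C y) := by
  rw [hC, ← Matrix.mulVec_mulVec, dotProduct_mulVec, ← Matrix.star_mulVec]
  simp only [gg, PiLp.inner_apply, PiLp.toLp_apply, RCLike.inner_apply, dotProduct, Pi.star_apply,
    RCLike.star_def]
  exact Finset.sum_congr rfl fun _ _ => mul_comm _ _

end TEST

/-- Lemma 4: if the controlled-choice channel maps `ρ` to a maximally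
entangled pure state of the decoherence-free subspace, then every `v_j` is a unit vector and
`ρ` is supported on the span of the vectors `v_j ⊗ e_j`. -/
theorem stmt_11 (d m : ℕ) [NeZero d] [NeZero m] (hd : 2 ≤ d)
    (v : Fin d → Fin m → Fin d → ℂ)
    (hv : ∀ j : Fin d,
      ∑ i : Fin m, vecMulVec (v j i) (star (v j i)) = (1 : Matrix (Fin d) (Fin d) ℂ))
    (ρ : Matrix (Fin d × Fin d) (Fin d × Fin d) ℂ)
    (hpos : ρ.PosSemidef) (htr : ρ.trace = 1)
    (Φ : Fin d × Fin d → ℂ)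
    (hunit : star Φ ⬝ᵥ Φ = 1)
    (hspan : (P0 d).mulVec Φ = Φ)
    (hmax : ∀ j : Fin d, ‖star (ejj d j) ⬝ᵥ Φ‖ ^ 2 = 1 / (d : ℝ))
    (hT : ∑ idx : Fin d → Fin m, Tkraus d m v idx * ρ * (Tkraus d m v idx)ᴴ =
      vecMulVec Φ (star Φ)) :
    (∀ j : Fin d, Real.sqrt (∑ a : Fin d, ‖v j 0 a‖ ^ 2) = 1) ∧
    (∀ j : Fin d,
      (((1 : Matrix (Fin d) (Fin d) ℂ) - vecMulVec (v j 0) (star (v j 0))) ⊗ₖ Emat d j j) * ρ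
        = 0) := by

  classical
  obtain ⟨C, hC⟩ : ∃ C : Matrix (Fin d × Fin d) (Fin d × Fin d) ℂ, ρ = Cᴴ * C := by
    open scoped MatrixOrder in
    exact CStarAlgebra.nonneg_iff_eq_star_mul_self.mp hpos.nonneg
  have hg : ∀ x y, star x ⬝ᵥ ρ.mulVec y = inner ℂ (gg d C x) (gg d C y) :=
    fun x y => hginner d ρ C hC x y
  have hd0 : (0:ℝ) < 1 / (d:ℝ) := by
    have : (0:ℝ) < (d:ℝ) := by exact_mod_cast Nat.pos_of_ne_zero (NeZero.ne d)
    positivity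
  have habs : ∀ j : Fin d, ‖Φ (j, j)‖ = Real.sqrt (1 / (d:ℝ)) := by
    intro j
    have h := hmax j
    rw [hPhi d Φ j] at h
    rw [← Real.sqrt_sq (norm_nonneg _), h]
  have hdiagC : ∀ j : Fin d, (∑ a : Fin d, ρ (a, j) (a, j)) = ((1 / (d:ℝ) : ℝ) : ℂ) := by
    intro j
    have h1 := hkey d m v ρ Φ hT j j
    rw [if_pos rfl] at h1
    rw [← hF1 d m v ρ hv j, ← h1, Complex.mul_conj, ← Complex.sq_norm, habs j,
      Real.sq_sqrt hd0.le]
  have hWsum : ∀ j : Fin d, ∑ i : Fin m, ‖gg d C (uu d m v j i)‖^2 = 1 / (d:ℝ) := by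
    intro j
    have h1 : ∑ i : Fin m, star (uu d m v j i) ⬝ᵥ ρ.mulVec (uu d m v j i)
        = ((1 / (d:ℝ) : ℝ) : ℂ) := by
      rw [hF1 d m v ρ hv j, hdiagC j]
    have h2 : ∑ i : Fin m, ((‖gg d C (uu d m v j i)‖^2 : ℝ) : ℂ) = ((1 / (d:ℝ) : ℝ) : ℂ) := by
      rw [← h1]
      refine Finset.sum_congr rfl fun i _ => ?_
      rw [hg, inner_self_eq_norm_sq_to_K]
      norm_cast
    exact_mod_cast h2
  have hWle : ∀ j : Fin d, ‖gg d C (uu d m v j 0)‖^2 ≤ 1 / (d:ℝ) := by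
    intro j
    rw [← hWsum j]
    exact Finset.single_le_sum (f := fun i => ‖gg d C (uu d m v j i)‖^2)
      (fun i _ => sq_nonneg _) (Finset.mem_univ 0)
  have hoff : ∀ j k : Fin d, j ≠ k →
      1 / (d:ℝ) ≤ ‖gg d C (uu d m v j 0)‖ * ‖gg d C (uu d m v k 0)‖ := by
    intro j k hjk
    have h1 := hkey d m v ρ Φ hT j k
    rw [if_neg hjk] at h1
    have h2 : ‖(inner ℂ (gg d C (uu d m v j 0)) (gg d C (uu d m v k 0)) : ℂ)‖ = 1 / (d:ℝ) := by
      rw [← hg, ← h1, norm_mul, Complex.norm_conj,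
        habs j, habs k, Real.mul_self_sqrt hd0.le]
    rw [← h2]
    exact norm_inner_le_norm _ _
  have hWeq : ∀ k : Fin d, ‖gg d C (uu d m v k 0)‖^2 = 1 / (d:ℝ) := by
    intro k
    have hnt : Nontrivial (Fin d) := Fin.nontrivial_iff_two_le.mpr hd
    obtain ⟨j, hj⟩ := exists_ne k
    have h1 := hoff j k hj
    have h2 := hWle j
    have h3 := hWle k
    have h4 := norm_nonneg (gg d C (uu d m v j 0))
    have h5 := norm_nonneg (gg d C (uu d m v k 0))
    refine le_antisymm h3 ?_
    nlinarith [mul_self_le_mul_self hd0.le h1, sq_nonneg (‖gg d C (uu d m v k 0)‖)]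
  have hdotall : ∀ j : Fin d,
      star (v j 0) ⬝ᵥ v j 0 = ((∑ a : Fin d, ‖v j 0 a‖^2 : ℝ) : ℂ) := by
    intro j
    push_cast
    refine Finset.sum_congr rfl fun a _ => ?_
    simp only [Pi.star_apply, RCLike.star_def]
    rw [mul_comm, Complex.mul_conj, ← Complex.sq_norm]
    push_cast
    ring
  have hnorm : ∀ j : Fin d, Real.sqrt (∑ a : Fin d, ‖v j 0 a‖ ^ 2) = 1 := by
    intro j
    set s : ℝ := ∑ a : Fin d, ‖v j 0 a‖ ^ 2 with hs
    have hsnn : 0 ≤ s := Finset.sum_nonneg fun a _ => sq_nonneg _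
    have hupper : s ≤ 1 := by
      have h0 := congrArg (fun M : Matrix (Fin d) (Fin d) ℂ =>
        star (v j 0) ⬝ᵥ M.mulVec (v j 0)) (hv j)
      rw [aux_sum_mulVec, aux_dot_sum, Matrix.one_mulVec, hdotall j] at h0
      have h0' : ∑ i : Fin m,
          ((Complex.normSq (star (v j i) ⬝ᵥ v j 0) : ℝ) : ℂ) = ((s:ℝ):ℂ) := by
        rw [← h0]
        refine Finset.sum_congr rfl fun i _ => ?_
        rw [aux_vecMulVec_mulVec, dotProduct_smul, smul_eq_mul,
          aux_conj_dot (v j 0) (v j i), Complex.mul_conj]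
      have h0'' : ∑ i : Fin m, Complex.normSq (star (v j i) ⬝ᵥ v j 0) = s := by
        exact_mod_cast h0'
      have hterm : Complex.normSq (star (v j 0) ⬝ᵥ v j 0) = s^2 := by
        rw [hdotall j, Complex.normSq_ofReal]
        ring
      have hle : s^2 ≤ s := by
        rw [← hterm, ← h0'']
        exact Finset.single_le_sum (f := fun i => Complex.normSq (star (v j i) ⬝ᵥ v j 0))
          (fun i _ => Complex.normSq_nonneg _) (Finset.mem_univ 0)
      nlinarith
    have hlower : 1 ≤ Real.sqrt s := by
      set b : Fin d → (Fin d × Fin d → ℂ) := fun a p => if p = (a, j) then 1 else 0 with hb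
      have hbval : ∀ a : Fin d, ((‖gg d C (b a)‖^2 : ℝ) : ℂ) = ρ (a, j) (a, j) := by
        intro a
        have h1 : star (b a) ⬝ᵥ ρ.mulVec (b a) = ρ (a, j) (a, j) := by
          simp [hb, dotProduct, Matrix.mulVec, apply_ite (starRingEnd ℂ), mul_ite, ite_mul,
            mul_zero, zero_mul, mul_one, one_mul, Finset.sum_ite_eq', RCLike.star_def]
        rw [← h1, hg, inner_self_eq_norm_sq_to_K]
        norm_cast
      have hbsum : ∑ a : Fin d, ‖gg d C (b a)‖^2 = 1/(d:ℝ) := by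
        have h2 : ∑ a : Fin d, ((‖gg d C (b a)‖^2:ℝ):ℂ) = ((1/(d:ℝ):ℝ):ℂ) := by
          rw [Finset.sum_congr rfl fun a _ => hbval a, hdiagC j]
        exact_mod_cast h2
      have hdecomp : uu d m v j 0 = ∑ a : Fin d, v j 0 a • b a := by
        funext p
        rw [Finset.sum_apply]
        simp only [Pi.smul_apply, smul_eq_mul, hb, uu, mul_ite, mul_one, mul_zero]
        by_cases hpj : p.2 = j
        · rw [if_pos hpj]
          rw [Finset.sum_eq_single p.1]
          · rw [if_pos (by rw [← hpj])]
          · intro c _ hc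
            rw [if_neg (by intro hcon; exact hc (congrArg Prod.fst hcon).symm)]
          · simp
        · rw [if_neg hpj]
          refine (Finset.sum_eq_zero fun a _ => ?_).symm
          rw [if_neg (by intro hcon; exact hpj (congrArg Prod.snd hcon))]
      have hgdecomp : gg d C (uu d m v j 0) = ∑ a : Fin d, v j 0 a • gg d C (b a) := by
        rw [show gg d C (uu d m v j 0) = WithLp.toLp 2 (C.mulVec (uu d m v j 0)) from rfl,
          hdecomp, aux_mulVec_lincomb, WithLp.toLp_sum]
        rfl
      have htri : ‖gg d C (uu d m v j 0)‖ ≤ ∑ a : Fin d, ‖v j 0 a‖ * ‖gg d C (b a)‖ := by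
        rw [hgdecomp]
        refine (norm_sum_le _ _).trans ?_
        refine Finset.sum_le_sum fun a _ => ?_
        rw [norm_smul]
      have hCS : (∑ a : Fin d, ‖v j 0 a‖ * ‖gg d C (b a)‖)^2 ≤ s * (1/(d:ℝ)) := by
        have h4 := Finset.sum_mul_sq_le_sq_mul_sq Finset.univ
          (fun a => ‖v j 0 a‖) (fun a => ‖gg d C (b a)‖)
        rw [hbsum] at h4
        exact h4
      have hnormu : ‖gg d C (uu d m v j 0)‖ = Real.sqrt (1/(d:ℝ)) := by
        rw [← Real.sqrt_sq (norm_nonneg _), hWeq j]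
      have h6 : Real.sqrt (1/(d:ℝ)) ≤ Real.sqrt s * Real.sqrt (1/(d:ℝ)) := by
        calc Real.sqrt (1/(d:ℝ)) = ‖gg d C (uu d m v j 0)‖ := hnormu.symm
          _ ≤ ∑ a : Fin d, ‖v j 0 a‖ * ‖gg d C (b a)‖ := htri
          _ = Real.sqrt ((∑ a : Fin d, ‖v j 0 a‖ * ‖gg d C (b a)‖)^2) :=
              (Real.sqrt_sq (Finset.sum_nonneg fun a _ =>
                mul_nonneg (norm_nonneg _) (norm_nonneg _))).symm
          _ ≤ Real.sqrt (s * (1/(d:ℝ))) := Real.sqrt_le_sqrt hCS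
          _ = Real.sqrt s * Real.sqrt (1/(d:ℝ)) := Real.sqrt_mul hsnn _
      have hsq : 0 < Real.sqrt (1/(d:ℝ)) := Real.sqrt_pos.mpr hd0
      nlinarith [Real.sqrt_nonneg s]
    have hup2 : Real.sqrt s ≤ 1 := by
      rw [show (1:ℝ) = Real.sqrt 1 by simp]
      exact Real.sqrt_le_sqrt hupper
    linarith
  refine ⟨hnorm, fun j => ?_⟩
  have hs1 : (∑ a : Fin d, ‖v j 0 a‖ ^ 2) = 1 := by
    have h := hnorm j
    have hsnn : 0 ≤ ∑ a : Fin d, ‖v j 0 a‖ ^ 2 :=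
      Finset.sum_nonneg fun a _ => sq_nonneg _
    have h2 := congrArg (fun r : ℝ => r^2) h
    simpa [Real.sq_sqrt hsnn] using h2
  have hs1c : star (v j 0) ⬝ᵥ v j 0 = 1 := by
    rw [hdotall j, hs1]
    norm_num
  have hPP : vecMulVec (v j 0) (star (v j 0)) * vecMulVec (v j 0) (star (v j 0))
      = vecMulVec (v j 0) (star (v j 0)) := by
    ext a c
    rw [Matrix.mul_apply]
    simp only [Matrix.vecMulVec_apply, Pi.star_apply, RCLike.star_def]
    calc ∑ q : Fin d, v j 0 a * (starRingEnd ℂ) (v j 0 q) * (v j 0 q * (starRingEnd ℂ) (v j 0 c))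
        = (∑ q : Fin d, (starRingEnd ℂ) (v j 0 q) * v j 0 q) * (v j 0 a * (starRingEnd ℂ) (v j 0 c)) := by
          rw [Finset.sum_mul]
          exact Finset.sum_congr rfl fun q _ => by ring
      _ = v j 0 a * (starRingEnd ℂ) (v j 0 c) := by
          have h7 : (∑ q : Fin d, (starRingEnd ℂ) (v j 0 q) * v j 0 q) = 1 := by
            rw [← hs1c]
            simp [dotProduct, RCLike.star_def]
          rw [h7, one_mul]
  have hAH : (((1 : Matrix (Fin d) (Fin d) ℂ) - vecMulVec (v j 0) (star (v j 0))) ⊗ₖ Emat d j j)ᴴ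
      = ((1 : Matrix (Fin d) (Fin d) ℂ) - vecMulVec (v j 0) (star (v j 0))) ⊗ₖ Emat d j j := by
    have hE : (Emat d j j)ᴴ = Emat d j j := by
      ext a c
      simp only [Matrix.conjTranspose_apply, Emat, Matrix.single, Matrix.of_apply,
        apply_ite (starRingEnd ℂ), _root_.map_one, _root_.map_zero, RCLike.star_def]
      by_cases h1 : j = a <;> by_cases h2 : j = c <;> simp [h1, h2]
    have h1h : ((1 : Matrix (Fin d) (Fin d) ℂ) - vecMulVec (v j 0) (star (v j 0)))ᴴ
        = (1 : Matrix (Fin d) (Fin d) ℂ) - vecMulVec (v j 0) (star (v j 0)) := by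
      rw [Matrix.conjTranspose_sub, Matrix.conjTranspose_one, aux_vecMulVec_conjT]
    rw [aux_kron_conjT, hE, h1h]
  have hEE : Emat d j j * Emat d j j = Emat d j j := by
    rw [Emat, Matrix.single_mul_single_same, one_mul]
  have h1m : ((1 : Matrix (Fin d) (Fin d) ℂ) - vecMulVec (v j 0) (star (v j 0)))
      * ((1 : Matrix (Fin d) (Fin d) ℂ) - vecMulVec (v j 0) (star (v j 0)))
      = (1 : Matrix (Fin d) (Fin d) ℂ) - vecMulVec (v j 0) (star (v j 0)) := by
    have hexp : ((1 : Matrix (Fin d) (Fin d) ℂ) - vecMulVec (v j 0) (star (v j 0)))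
        * ((1 : Matrix (Fin d) (Fin d) ℂ) - vecMulVec (v j 0) (star (v j 0)))
        = 1 - vecMulVec (v j 0) (star (v j 0)) - vecMulVec (v j 0) (star (v j 0))
          + vecMulVec (v j 0) (star (v j 0)) * vecMulVec (v j 0) (star (v j 0)) := by
      noncomm_ring
    rw [hexp, hPP]
    abel
  have hAA : (((1 : Matrix (Fin d) (Fin d) ℂ) - vecMulVec (v j 0) (star (v j 0))) ⊗ₖ Emat d j j)
      * (((1 : Matrix (Fin d) (Fin d) ℂ) - vecMulVec (v j 0) (star (v j 0))) ⊗ₖ Emat d j j)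
      = ((1 : Matrix (Fin d) (Fin d) ℂ) - vecMulVec (v j 0) (star (v j 0))) ⊗ₖ Emat d j j := by
    rw [← Matrix.mul_kronecker_mul, h1m, hEE]
  have hPE : vecMulVec (v j 0) (star (v j 0)) ⊗ₖ Emat d j j
      = vecMulVec (uu d m v j 0) (star (uu d m v j 0)) := by
    ext p q
    simp only [Matrix.kroneckerMap_apply, Matrix.vecMulVec_apply, Pi.star_apply,
      RCLike.star_def, Emat, Matrix.single, Matrix.of_apply, uu, _root_.map_mul,
      apply_ite (starRingEnd ℂ), _root_.map_one, _root_.map_zero]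
    by_cases h1 : p.2 = j <;> by_cases h2 : q.2 = j
    · simp [h1, h2]
      try ring
    · have h2' : ¬(j = q.2) := fun h => h2 h.symm
      simp [h1, h2, h2']
    · have h1' : ¬(j = p.2) := fun h => h1 h.symm
      simp [h1, h2, h1']
    · have h1' : ¬(j = p.2) := fun h => h1 h.symm
      simp [h1, h2, h1']
  have hsplit : (((1 : Matrix (Fin d) (Fin d) ℂ) - vecMulVec (v j 0) (star (v j 0))) ⊗ₖ Emat d j j)
      = (1 : Matrix (Fin d) (Fin d) ℂ) ⊗ₖ Emat d j j
        - vecMulVec (uu d m v j 0) (star (uu d m v j 0)) := by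
    rw [← hPE]
    ext p q
    simp only [Matrix.kroneckerMap_apply, Matrix.sub_apply, sub_mul]
  have htr1 : (ρ * ((1 : Matrix (Fin d) (Fin d) ℂ) ⊗ₖ Emat d j j)).trace
      = ∑ a : Fin d, ρ (a, j) (a, j) := by
    simp only [Matrix.trace, Matrix.diag, Matrix.mul_apply, Matrix.kroneckerMap_apply,
      Matrix.one_apply, Emat, Matrix.single, Matrix.of_apply, Fintype.sum_prod_type,
      mul_ite, ite_mul, mul_zero, zero_mul, mul_one, one_mul, ite_and]
    simp [Finset.sum_ite_eq, Finset.sum_ite_eq']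
  have htr0 : (ρ * (((1 : Matrix (Fin d) (Fin d) ℂ) - vecMulVec (v j 0) (star (v j 0))) ⊗ₖ Emat d j j)).trace = 0 := by
    rw [hsplit, Matrix.mul_sub, Matrix.trace_sub, htr1, aux_trace_mul_vecMulVec, hdiagC j]
    rw [hg]
    have h8 : (inner ℂ (gg d C (uu d m v j 0)) (gg d C (uu d m v j 0)) : ℂ)
        = ((1/(d:ℝ):ℝ):ℂ) := by
      rw [inner_self_eq_norm_sq_to_K]
      norm_cast
      rw [hWeq j]
      rfl
    rw [h8, sub_self]
  set A := ((1 : Matrix (Fin d) (Fin d) ℂ) - vecMulVec (v j 0) (star (v j 0))) ⊗ₖ Emat d j j with hA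
  have hMtr : ((C * A)ᴴ * (C * A)).trace = 0 := by
    rw [Matrix.conjTranspose_mul, hAH]
    have h9 : A * Cᴴ * (C * A) = A * ρ * A := by
      rw [hC]
      simp only [Matrix.mul_assoc]
    rw [h9, Matrix.trace_mul_comm (A * ρ) A, ← Matrix.mul_assoc, hAA,
      Matrix.trace_mul_comm A ρ, htr0]
  have hM0 : C * A = 0 := aux_trace_zero hMtr
  have hfin : A * ρ = ((C * A)ᴴ) * C := by
    rw [Matrix.conjTranspose_mul, hAH, hC, Matrix.mul_assoc]
  rw [hfin, hM0]
  simp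
end

section
/- Let d ≥ 1, D ≥ 1, let v_0,…,v_{d−1} ∈ ℂ^D be unit vectors, and let θ_{x,j} ∈ ℝ for x, j ∈ Fin d. Define Ψ_x := (1/√d) Σ_{j∈Fin d} exp(iθ_{x,j}) · v_j ⊗ e_j ∈ ℂ^D ⊗ ℂ^d. Suppose (i) the family (Ψ_x)_{x∈Fin d} is orthonormal, and (ii) the partial trace over the first tensor factor of Ψ_x Ψ_x† is the same d×d matrix for all x ∈ Fin d. Then ⟨v_l, v_j⟩ = 0 for all l ≠ j; in particular the v_j are orthonormal and every Ψ_x is a maximally entangled unit vector. -/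
open Matrix Kronecker BigOperators Complex

/-- The vector `Ψ = (1/√d) Σ_j exp(iθ_j) v_j ⊗ e_j ∈ ℂ^D ⊗ ℂ^d`. -/
noncomputable def PsiVec (d D : ℕ) (v : Fin d → Fin D → ℂ) (θ : Fin d → ℝ) :
    Fin D × Fin d → ℂ :=
  fun p => ((1 / Real.sqrt d : ℝ) : ℂ) * Complex.exp (Complex.I * (θ p.2 : ℂ)) * v p.2 p.1

/-- an orthonormal family `Ψ_x = (1/√d) Σ_j exp(iθ_{x,j}) v_j ⊗ e_j` with
identical control marginals forces the unit vectors `v_j` to be pairwise orthogonal. -/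
theorem stmt_12 (d D : ℕ) [NeZero d] [NeZero D]
    (v : Fin d → Fin D → ℂ)
    (hv : ∀ j : Fin d, Real.sqrt (∑ i : Fin D, ‖v j i‖ ^ 2) = 1)
    (θ : Fin d → Fin d → ℝ)
    (horth : ∀ x y : Fin d,
      star (PsiVec d D v (θ x)) ⬝ᵥ PsiVec d D v (θ y) = if x = y then 1 else 0)
    (hmarg : ∀ x y : Fin d, ∀ j j' : Fin d,
      (∑ i : Fin D, PsiVec d D v (θ x) (i, j) * star (PsiVec d D v (θ x) (i, j'))) =
        ∑ i : Fin D, PsiVec d D v (θ y) (i, j) * star (PsiVec d D v (θ y) (i, j'))) :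
    ∀ l j : Fin d, l ≠ j → star (v l) ⬝ᵥ v j = 0 := by
  intro l j hlj
  by_contra hc0
  have hdpos : (0:ℝ) < d := Nat.cast_pos.mpr (Nat.pos_of_ne_zero (NeZero.ne d))
  set c : ℂ := ((1 / Real.sqrt d : ℝ) : ℂ) with hc
  have hc2 : c * c = 1 / (d:ℂ) := by
    rw [hc, ← Complex.ofReal_mul, div_mul_div_comm, one_mul,
      Real.mul_self_sqrt hdpos.le]
    push_cast
    ring
  have hcne : c ≠ 0 := by
    rw [hc]
    simp only [ne_eq, Complex.ofReal_eq_zero, div_eq_zero_iff, one_ne_zero, false_or]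
    exact fun h => (Real.sqrt_pos.mpr hdpos).ne' h
  have hstarc : (starRingEnd ℂ) c = c := by rw [hc]; exact Complex.conj_ofReal _
  have hv' : ∀ k : Fin d, (∑ i : Fin D, (starRingEnd ℂ) (v k i) * v k i) = 1 := by
    intro k
    have h1 : (∑ i : Fin D, ‖v k i‖ ^ 2) = 1 := by
      have := hv k
      rwa [Real.sqrt_eq_one] at this
    have : (∑ i : Fin D, (starRingEnd ℂ) (v k i) * v k i)
        = ((∑ i : Fin D, ‖v k i‖ ^ 2 : ℝ) : ℂ) := by
      rw [Complex.ofReal_sum]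
      refine Finset.sum_congr rfl fun i _ => ?_
      rw [← Complex.normSq_eq_norm_sq, Complex.normSq_eq_conj_mul_self]
    rw [this, h1, Complex.ofReal_one]
  -- generic dot product formula
  have hdot : ∀ t1 t2 : Fin d → ℝ,
      star (PsiVec d D v t1) ⬝ᵥ PsiVec d D v t2 =
      (c*c) * ∑ k : Fin d,
        (starRingEnd ℂ) (Complex.exp (Complex.I * (t1 k : ℂ))) *
          Complex.exp (Complex.I * (t2 k : ℂ)) := by
    intro t1 t2
    rw [dotProduct, Fintype.sum_prod_type, Finset.sum_comm, Finset.mul_sum]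
    refine Finset.sum_congr rfl fun k _ => ?_
    have hterm : ∀ i : Fin D, star (PsiVec d D v t1) (i,k) * PsiVec d D v t2 (i,k)
        = ((c*c) * ((starRingEnd ℂ) (Complex.exp (Complex.I * (t1 k : ℂ))) *
            Complex.exp (Complex.I * (t2 k : ℂ)))) * ((starRingEnd ℂ) (v k i) * v k i) := by
      intro i
      simp only [PsiVec, Pi.star_apply, RCLike.star_def, _root_.map_mul, Complex.conj_ofReal, hc]
      ring
    calc (∑ i : Fin D, star (PsiVec d D v t1) (i,k) * PsiVec d D v t2 (i,k))
        = ∑ i : Fin D, ((c*c) * ((starRingEnd ℂ) (Complex.exp (Complex.I * (t1 k : ℂ))) *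
            Complex.exp (Complex.I * (t2 k : ℂ)))) * ((starRingEnd ℂ) (v k i) * v k i) :=
          Finset.sum_congr rfl fun i _ => hterm i
      _ = ((c*c) * ((starRingEnd ℂ) (Complex.exp (Complex.I * (t1 k : ℂ))) *
            Complex.exp (Complex.I * (t2 k : ℂ)))) * ∑ i : Fin D, (starRingEnd ℂ) (v k i) * v k i := by
          rw [← Finset.mul_sum]
      _ = _ := by rw [hv' k, mul_one]
  -- the unitary matrix
  set U : Matrix (Fin d) (Fin d) ℂ :=
    Matrix.of (fun x k => c * Complex.exp (Complex.I * (θ x k : ℂ))) with hU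
  have hU1 : U * Uᴴ = 1 := by
    ext x y
    have := horth y x
    rw [hdot] at this
    simp only [Matrix.mul_apply, Matrix.conjTranspose_apply, hU, Matrix.of_apply,
      Matrix.one_apply, RCLike.star_def, _root_.map_mul, hstarc]
    calc (∑ k : Fin d, c * Complex.exp (Complex.I * (θ x k : ℂ)) *
          (c * (starRingEnd ℂ) (Complex.exp (Complex.I * (θ y k : ℂ)))))
        = (c*c) * ∑ k : Fin d, (starRingEnd ℂ) (Complex.exp (Complex.I * (θ y k : ℂ))) *
            Complex.exp (Complex.I * (θ x k : ℂ)) := by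
          rw [Finset.mul_sum]; refine Finset.sum_congr rfl fun k _ => ?_; ring
      _ = if y = x then 1 else 0 := this
      _ = if x = y then 1 else 0 := by simp [eq_comm]
  have hU2 : Uᴴ * U = 1 := mul_eq_one_comm.mp hU1
  have hcol : (∑ x : Fin d, (starRingEnd ℂ) (Complex.exp (Complex.I * (θ x l : ℂ))) *
      Complex.exp (Complex.I * (θ x j : ℂ))) = 0 := by
    have := congrFun (congrFun hU2 l) j
    simp only [Matrix.mul_apply, Matrix.conjTranspose_apply, hU, Matrix.of_apply,
      Matrix.one_apply, if_neg hlj, RCLike.star_def, _root_.map_mul, hstarc] at this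
    have h2 : (c*c) * (∑ x : Fin d, (starRingEnd ℂ) (Complex.exp (Complex.I * (θ x l : ℂ))) *
        Complex.exp (Complex.I * (θ x j : ℂ))) = 0 := by
      rw [Finset.mul_sum, ← this]
      refine Finset.sum_congr rfl fun x _ => ?_; ring
    exact (mul_eq_zero.mp h2).resolve_left (mul_ne_zero hcne hcne)
  -- the marginal condition
  set C' : ℂ := ∑ i : Fin D, v l i * (starRingEnd ℂ) (v j i) with hC'def
  have hC' : C' ≠ 0 := by
    intro h
    apply hc0
    have := congrArg (starRingEnd ℂ) h
    simp only [map_sum, _root_.map_mul, Complex.conj_conj, map_zero, hC'def] at this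
    rw [dotProduct]
    rw [← this]
    refine Finset.sum_congr rfl fun i _ => ?_
    simp [mul_comm]
  have hmargside : ∀ x : Fin d,
      (∑ i : Fin D, PsiVec d D v (θ x) (i, l) * star (PsiVec d D v (θ x) (i, j))) =
      ((c*c) * (Complex.exp (Complex.I * (θ x l : ℂ)) *
        (starRingEnd ℂ) (Complex.exp (Complex.I * (θ x j : ℂ))))) * C' := by
    intro x
    rw [hC'def, Finset.mul_sum]
    refine Finset.sum_congr rfl fun i _ => ?_
    simp only [PsiVec, Pi.star_apply, RCLike.star_def, _root_.map_mul, Complex.conj_ofReal, hc]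
    ring
  set ω : ℂ := Complex.exp (Complex.I * (θ 0 l : ℂ)) *
      (starRingEnd ℂ) (Complex.exp (Complex.I * (θ 0 j : ℂ))) with hωdef
  have hωne : ω ≠ 0 := mul_ne_zero (Complex.exp_ne_zero _)
    (by simpa using Complex.exp_ne_zero (Complex.I * (θ 0 j : ℂ)))
  have hphase : ∀ x : Fin d, Complex.exp (Complex.I * (θ x l : ℂ)) *
      (starRingEnd ℂ) (Complex.exp (Complex.I * (θ x j : ℂ))) = ω := by
    intro x
    have h := hmarg x 0 l j
    rw [hmargside x, hmargside 0] at h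
    have h2 := mul_right_cancel₀ hC' h
    have h3 := mul_left_cancel₀ (mul_ne_zero hcne hcne) h2
    exact h3
  have hsum : (∑ x : Fin d, (starRingEnd ℂ) (Complex.exp (Complex.I * (θ x l : ℂ))) *
      Complex.exp (Complex.I * (θ x j : ℂ))) = (d : ℂ) * (starRingEnd ℂ) ω := by
    calc (∑ x : Fin d, (starRingEnd ℂ) (Complex.exp (Complex.I * (θ x l : ℂ))) *
        Complex.exp (Complex.I * (θ x j : ℂ)))
        = ∑ _x : Fin d, (starRingEnd ℂ) ω := by
          refine Finset.sum_congr rfl fun x _ => ?_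
          rw [← hphase x, _root_.map_mul, Complex.conj_conj, mul_comm]
      _ = (d : ℂ) * (starRingEnd ℂ) ω := by
          rw [Finset.sum_const, Finset.card_univ, Fintype.card_fin, nsmul_eq_mul]
  rw [hcol] at hsum
  have : (starRingEnd ℂ) ω = 0 := by
    rcases mul_eq_zero.mp hsum.symm with h | h
    · exact absurd h (Nat.cast_ne_zero.mpr (NeZero.ne d))
    · exact h
  exact hωne (by simpa using congrArg (starRingEnd ℂ) this)
end

section
/- Let d ≥ 1 and D ≥ 1. For every matrix ρ on ℂ^D ⊗ ℂ^d ⊗ ℂ^d satisfying (I_D ⊗ P_0) ρ (I_D ⊗ P_0) = ρ, the channel obtained by applying the controlled-order channel S on the last two tensor factors and the identity on the first factor leaves ρ invariant: Σ_{(i_0,…,i_{d−1})∈(Fin d)^d} (I_D ⊗ S_{i_0,…,i_{d−1}}) ρ (I_D ⊗ S_{i_0,…,i_{d−1}})† = ρ. In particular, for D = d and GHZ₃ := (1/√d) Σ_{j∈Fin d} e_j ⊗ e_j ⊗ e_j, the GHZ state GHZ₃ GHZ₃† is left invariant. -/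
open Matrix Kronecker BigOperators Complex

noncomputable def GHZ3 (d : ℕ) : Fin d × (Fin d × Fin d) → ℂ :=
  fun p => if p.1 = p.2.1 ∧ p.2.1 = p.2.2 then ((1 / Real.sqrt d : ℝ) : ℂ) else 0

open Fin.NatCast in
lemma chain (d : ℕ) [NeZero d] (f : Fin d → Fin d) (j : Fin d) (n : ℕ) :
    (((List.range n).map (fun k : ℕ => Emat d (j + (k : Fin d)) (f (j + (k : Fin d))))).prod)
      * Emat d (j + (n : Fin d)) j
    = if ∀ k : ℕ, k < n → f (j + (k : Fin d)) = j + (k : Fin d) + 1 then Emat d j j else 0 := by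
  induction n with
  | zero => simp
  | succ n ih =>
    rw [List.range_succ, List.map_append, List.prod_append]
    simp only [List.map_cons, List.map_nil, List.prod_cons, List.prod_nil, mul_one]
    have hc : ((n + 1 : ℕ) : Fin d) = (n : Fin d) + 1 := by push_cast; ring
    rw [hc, mul_assoc, Emat_mul]
    simp only [← add_assoc]
    by_cases h : f (j + (n : Fin d)) = j + (n : Fin d) + 1
    · rw [if_pos h, ih]
      congr 1
      simp only [eq_iff_iff]
      constructor
      · intro H k hk
        rcases Nat.lt_succ_iff_lt_or_eq.mp hk with hk | hk
        · exact H k hk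
        · subst hk; exact h
      · intro H k hk; exact H k (Nat.lt_succ_of_lt hk)
    · rw [if_neg h, mul_zero, if_neg]
      intro H
      exact h (H n (Nat.lt_succ_self n))

open Fin.NatCast in
lemma Sop_mul_P0 (d : ℕ) [NeZero d] (f : Fin d → Fin d) :
    Sop d f * P0 d = if ∀ m : Fin d, f m = m + 1 then P0 d else 0 := by
  have hfin : ∀ j : Fin d,
      ((List.finRange d).map (fun k => Emat d (j + k) (f (j + k)))).prod
      = ((List.range d).map (fun k : ℕ => Emat d (j + (k : Fin d)) (f (j + (k : Fin d))))).prod := by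
    intro j
    rw [show List.range d = (List.finRange d).map Fin.val from List.ext_getElem (by simp) (by simp), List.map_map]
    congr 1
    apply List.map_congr_left
    intro a _
    simp [Fin.cast_val_eq_self]
  have key : ∀ j : Fin d,
      ((List.finRange d).map (fun k => Emat d (j + k) (f (j + k)))).prod * Emat d j j
      = if ∀ m : Fin d, f m = m + 1 then Emat d j j else 0 := by
    intro j
    rw [hfin j]
    have := chain d f j d
    rw [Fin.natCast_self, add_zero] at this
    rw [this]
    congr 1
    simp only [eq_iff_iff]
    constructor
    · intro H m
      have hm : ((m - j).val : Fin d) = m - j := Fin.cast_val_eq_self _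
      have := H (m - j).val (m - j).isLt
      rw [hm] at this
      simpa using this
    · intro H k _; exact H _
  unfold Sop P0
  rw [Finset.sum_mul]
  have : ∀ j : Fin d,
      (((List.finRange d).map (fun k => Emat d (j + k) (f (j + k)))).prod ⊗ₖ Emat d j j)
        * (∑ i : Fin d, Emat d i i ⊗ₖ Emat d i i)
      = (if ∀ m : Fin d, f m = m + 1 then Emat d j j else 0) ⊗ₖ Emat d j j := by
    intro j
    rw [Finset.mul_sum]
    rw [Finset.sum_eq_single j]
    · rw [← mul_kronecker_mul, key j, Emat_mul, if_pos rfl]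
    · intro i _ hij
      rw [← mul_kronecker_mul, Emat_mul, if_neg (Ne.symm hij), kronecker_zero]
    · intro h; exact absurd (Finset.mem_univ j) h
  rw [Finset.sum_congr rfl (fun j _ => this j)]
  split
  · rfl
  · simp

lemma kron_ct {m n p q : Type*} [Fintype m] [Fintype n] [Fintype p] [Fintype q]
    (A : Matrix m n ℂ) (B : Matrix p q ℂ) : (A ⊗ₖ B)ᴴ = Aᴴ ⊗ₖ Bᴴ := by
  ext ⟨i, j⟩ ⟨k, l⟩
  simp [Matrix.conjTranspose_apply, Matrix.kroneckerMap_apply, star_mul']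

lemma P0_herm (d : ℕ) : (P0 d)ᴴ = P0 d := by
  unfold P0 Emat
  ext ⟨a, b⟩ ⟨c, e⟩
  simp only [Matrix.conjTranspose_apply, Matrix.sum_apply, star_sum,
    Matrix.kroneckerMap_apply, Matrix.single, Matrix.of_apply, ite_mul, one_mul, zero_mul,
    ← ite_and, apply_ite (star : ℂ → ℂ), star_one, star_zero]
  apply Finset.sum_congr rfl
  intro j _
  congr 1
  simp only [eq_iff_iff]
  tauto

lemma ghz_fix (d : ℕ) [NeZero d] :
    ((1 : Matrix (Fin d) (Fin d) ℂ) ⊗ₖ P0 d) *ᵥ GHZ3 d = GHZ3 d := by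
  ext ⟨a, b, c⟩
  simp only [Matrix.mulVec, dotProduct, Matrix.kroneckerMap_apply, P0, Emat, GHZ3,
    Matrix.sum_apply, Matrix.single, Matrix.of_apply, Matrix.one_apply,
    Fintype.sum_prod_type, ← ite_and, Finset.sum_ite_eq, Finset.sum_ite_eq',
    Finset.mem_univ, if_true, ite_mul, zero_mul, one_mul, mul_ite, mul_zero, mul_one,
    Finset.sum_ite_irrel, Finset.sum_const_zero]
  rw [Finset.sum_eq_single a (fun x _ hx => by simp [Ne.symm hx]) (by simp)]
  rw [Finset.sum_eq_single a (fun x _ hx => by simp [Ne.symm hx]) (by simp)]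
  rw [Finset.sum_eq_single a (fun x _ hx => by simp [Ne.symm hx]) (by simp)]
  rw [Finset.sum_eq_single b (fun x _ hx => by simp [hx]) (by simp)]
  by_cases h1 : a = b <;> by_cases h2 : b = c <;> simp [h1, h2] <;> aesop

lemma G_inv (d : ℕ) [NeZero d] :
    ((1 : Matrix (Fin d) (Fin d) ℂ) ⊗ₖ P0 d) * vecMulVec (GHZ3 d) (star (GHZ3 d)) *
      ((1 : Matrix (Fin d) (Fin d) ℂ) ⊗ₖ P0 d) = vecMulVec (GHZ3 d) (star (GHZ3 d)) := by
  set M := (1 : Matrix (Fin d) (Fin d) ℂ) ⊗ₖ P0 d with hM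
  have hMH : Mᴴ = M := by rw [hM, kron_ct, Matrix.conjTranspose_one, P0_herm]
  have h1 : M * vecMulVec (GHZ3 d) (star (GHZ3 d)) = vecMulVec (GHZ3 d) (star (GHZ3 d)) := by
    ext i j
    simp only [Matrix.mul_apply, Matrix.vecMulVec_apply, ← mul_assoc]
    rw [← Finset.sum_mul]
    congr 1
    have := congrFun (ghz_fix d) i
    simpa [Matrix.mulVec, dotProduct, hM] using this
  have h2 : vecMulVec (GHZ3 d) (star (GHZ3 d)) * M = vecMulVec (GHZ3 d) (star (GHZ3 d)) := by
    have hGH : (vecMulVec (GHZ3 d) (star (GHZ3 d)))ᴴ = vecMulVec (GHZ3 d) (star (GHZ3 d)) := by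
      ext i j
      simp [Matrix.conjTranspose_apply, Matrix.vecMulVec_apply, star_mul', Pi.star_apply, mul_comm]
    calc vecMulVec (GHZ3 d) (star (GHZ3 d)) * M
        = (Mᴴ * (vecMulVec (GHZ3 d) (star (GHZ3 d)))ᴴ)ᴴ := by
          rw [← Matrix.conjTranspose_mul, Matrix.conjTranspose_conjTranspose]
      _ = vecMulVec (GHZ3 d) (star (GHZ3 d)) := by rw [hMH, hGH, h1, hGH]
  rw [h1, h2]

lemma main_lemma (d D : ℕ) [NeZero d] [NeZero D] :
    ∀ ρ : Matrix (Fin D × (Fin d × Fin d)) (Fin D × (Fin d × Fin d)) ℂ,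
      ((1 : Matrix (Fin D) (Fin D) ℂ) ⊗ₖ P0 d) * ρ * ((1 : Matrix (Fin D) (Fin D) ℂ) ⊗ₖ P0 d)
          = ρ →
        ∑ idx : Fin d → Fin d,
          ((1 : Matrix (Fin D) (Fin D) ℂ) ⊗ₖ Sop d idx) * ρ *
            ((1 : Matrix (Fin D) (Fin D) ℂ) ⊗ₖ Sop d idx)ᴴ = ρ := by
  intro ρ hρ
  have key : ∀ f : Fin d → Fin d,
      ((1 : Matrix (Fin D) (Fin D) ℂ) ⊗ₖ Sop d f) * ρ *
        ((1 : Matrix (Fin D) (Fin D) ℂ) ⊗ₖ Sop d f)ᴴ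
      = ((1 : Matrix (Fin D) (Fin D) ℂ) ⊗ₖ (Sop d f * P0 d)) * ρ *
        ((1 : Matrix (Fin D) (Fin D) ℂ) ⊗ₖ (Sop d f * P0 d))ᴴ := by
    intro f
    have hP : ((1 : Matrix (Fin D) (Fin D) ℂ) ⊗ₖ P0 d)ᴴ
        = (1 : Matrix (Fin D) (Fin D) ℂ) ⊗ₖ P0 d := by
      rw [kron_ct, Matrix.conjTranspose_one, P0_herm]
    conv_lhs => rw [← hρ]
    have hSP : ((1 : Matrix (Fin D) (Fin D) ℂ) ⊗ₖ Sop d f) *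
        ((1 : Matrix (Fin D) (Fin D) ℂ) ⊗ₖ P0 d)
        = (1 : Matrix (Fin D) (Fin D) ℂ) ⊗ₖ (Sop d f * P0 d) := by
      rw [← mul_kronecker_mul, one_mul]
    calc ((1 : Matrix (Fin D) (Fin D) ℂ) ⊗ₖ Sop d f) *
          (((1 : Matrix (Fin D) (Fin D) ℂ) ⊗ₖ P0 d) * ρ *
            ((1 : Matrix (Fin D) (Fin D) ℂ) ⊗ₖ P0 d)) *
          ((1 : Matrix (Fin D) (Fin D) ℂ) ⊗ₖ Sop d f)ᴴ
        = (((1 : Matrix (Fin D) (Fin D) ℂ) ⊗ₖ Sop d f) *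
            ((1 : Matrix (Fin D) (Fin D) ℂ) ⊗ₖ P0 d)) * ρ *
          (((1 : Matrix (Fin D) (Fin D) ℂ) ⊗ₖ Sop d f) *
            ((1 : Matrix (Fin D) (Fin D) ℂ) ⊗ₖ P0 d))ᴴ := by
          rw [Matrix.conjTranspose_mul, hP]
          noncomm_ring
      _ = _ := by rw [hSP]
  rw [Finset.sum_congr rfl fun f _ => key f]
  rw [Finset.sum_eq_single (fun m : Fin d => m + 1)]
  · rw [Sop_mul_P0, if_pos fun m => rfl]
    have hP : ((1 : Matrix (Fin D) (Fin D) ℂ) ⊗ₖ P0 d)ᴴ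
        = (1 : Matrix (Fin D) (Fin D) ℂ) ⊗ₖ P0 d := by
      rw [kron_ct, Matrix.conjTranspose_one, P0_herm]
    rw [hP, hρ]
  · intro f _ hf
    rw [Sop_mul_P0, if_neg, kronecker_zero, Matrix.zero_mul, Matrix.zero_mul]
    intro H
    exact hf (funext H)
  · intro h; exact absurd (Finset.mem_univ _) h


/-- `I_D ⊗ S` leaves invariant every matrix supported on the subspace
`I_D ⊗ P₀`; in particular the GHZ state is preserved. -/
theorem stmt_14 (d D : ℕ) [NeZero d] [NeZero D] :
    (∀ ρ : Matrix (Fin D × (Fin d × Fin d)) (Fin D × (Fin d × Fin d)) ℂ,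
      ((1 : Matrix (Fin D) (Fin D) ℂ) ⊗ₖ P0 d) * ρ * ((1 : Matrix (Fin D) (Fin D) ℂ) ⊗ₖ P0 d)
          = ρ →
        ∑ idx : Fin d → Fin d,
          ((1 : Matrix (Fin D) (Fin D) ℂ) ⊗ₖ Sop d idx) * ρ *
            ((1 : Matrix (Fin D) (Fin D) ℂ) ⊗ₖ Sop d idx)ᴴ = ρ) ∧
    (∑ idx : Fin d → Fin d,
        ((1 : Matrix (Fin d) (Fin d) ℂ) ⊗ₖ Sop d idx) *
            vecMulVec (GHZ3 d) (star (GHZ3 d)) *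
          ((1 : Matrix (Fin d) (Fin d) ℂ) ⊗ₖ Sop d idx)ᴴ =
      vecMulVec (GHZ3 d) (star (GHZ3 d))) := by
  exact ⟨main_lemma d D, main_lemma d d _ (G_inv d)⟩
end

section
/- (Core of Lemma 8 of the Supplemental Material.) Let d ≥ 2, D ≥ 1, let ψ_0,…,ψ_{d−1} ∈ ℂ^D be orthonormal, and set ψ := (1/√d) Σ_{j∈Fin d} ψ_j ⊗ e_j ⊗ e_j ∈ ℂ^D ⊗ ℂ^d ⊗ ℂ^d. Let ρ* be a density matrix on ℂ^D ⊗ ℂ^d ⊗ ℂ^d. If Σ_{(i_0,…,i_{d−1})∈(Fin d)^d} (I_D ⊗ S_{i_0,…,i_{d−1}}) ρ* (I_D ⊗ S_{i_0,…,i_{d−1}})† = ψψ†, where the controlled-order Kraus operators S act on the last two tensor factors, then ρ* = ψψ†. -/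
open Matrix Kronecker BigOperators Complex
open scoped ComplexOrder
open scoped Classical
open Fin.NatCast
open Fin.CommRing

/-- The vector `(1/√d) Σ_j ψ_j ⊗ e_j ⊗ e_j ∈ ℂ^D ⊗ ℂ^d ⊗ ℂ^d`. -/
noncomputable def GHZpsi (d D : ℕ) (ψv : Fin d → Fin D → ℂ) :
    Fin D × (Fin d × Fin d) → ℂ :=
  fun p => ((1 / Real.sqrt d : ℝ) : ℂ) * (if p.2.1 = p.2.2 then ψv p.2.1 p.1 else 0)


lemma emat_mul_same (d : ℕ) (a b c : Fin d) : Emat d a b * Emat d b c = Emat d a c := by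
  unfold Emat
  rw [Matrix.single_mul_single_same]
  norm_num

lemma emat_mul_ne (d : ℕ) (a b b' c : Fin d) (h : b ≠ b') : Emat d a b * Emat d b' c = 0 :=
  by unfold Emat; exact Matrix.single_mul_single_of_ne (h := h) ..

lemma emat_prod_range (d : ℕ) [NeZero d] (g : Fin d → Fin d) (j : Fin d) :
    ∀ m : ℕ, 0 < m →
    ((List.range m).map (fun k : ℕ => Emat d (j + k) (g (j + k)))).prod =
      if ∀ k : ℕ, k + 1 < m → g (j + k) = j + (k:Fin d) + 1 then Emat d j (g (j + ((m-1 : ℕ) : Fin d))) else 0 := by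
  intro m
  induction m with
  | zero => omega
  | succ m ih =>
    intro _
    rcases Nat.eq_zero_or_pos m with rfl | hm
    · rw [List.range_succ]; simp
    rw [List.range_succ, List.map_append, List.prod_append, ih hm]
    simp only [List.map_singleton, List.prod_singleton]
    by_cases hall : ∀ k : ℕ, k + 1 < m → g (j + k) = j + (k:Fin d) + 1
    · rw [if_pos hall]
      by_cases hlast : g (j + ((m-1:ℕ) : Fin d)) = j + ((m-1:ℕ):Fin d) + 1
      · have hall' : ∀ k : ℕ, k + 1 < m + 1 → g (j + k) = j + (k:Fin d) + 1 := by
          intro k hk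
          rcases Nat.lt_or_ge (k+1) m with h | h
          · exact hall k h
          · have : k = m - 1 := by omega
            subst this; exact hlast
        rw [if_pos hall']
        have hc : ((m-1:ℕ):Fin d) + 1 = ((m:ℕ) : Fin d) := by
          have : ((m-1:ℕ):Fin d) + 1 = (((m-1)+1 : ℕ) : Fin d) := by push_cast; ring
          rw [this]; congr 1; omega
        rw [hlast, add_assoc, hc, Nat.add_sub_cancel]
        exact emat_mul_same d j (j + (m:Fin d)) (g (j + (m:Fin d)))
      · have hall' : ¬ ∀ k : ℕ, k + 1 < m + 1 → g (j + k) = j + (k:Fin d) + 1 := by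
          intro h; exact hlast (h (m-1) (by omega))
        rw [if_neg hall']
        apply emat_mul_ne
        intro h
        apply hlast
        have hc : ((m-1:ℕ):Fin d) + 1 = ((m:ℕ) : Fin d) := by
          have : ((m-1:ℕ):Fin d) + 1 = (((m-1)+1 : ℕ) : Fin d) := by push_cast; ring
          rw [this]; congr 1; omega
        rw [h, add_assoc, hc]
    · rw [if_neg hall, if_neg (fun h => hall (fun k hk => h k (by omega))), zero_mul]

lemma finRange_map_eq {β : Type*} (d : ℕ) [NeZero d] (f : Fin d → β) :
    (List.finRange d).map f = (List.range d).map (fun k : ℕ => f k) := by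
  rw [List.finRange_eq_pmap_range, List.map_pmap]
  rw [List.pmap_eq_map_attach]
  rw [← List.attach_map_val (l := List.range d) (f := fun k : ℕ => f k)]
  apply List.map_congr_left
  intro a _
  congr 1
  have := a.2
  simp only [List.mem_range] at this
  exact Fin.ext (by simp [Fin.val_cast_of_lt this])

lemma natCast_dsub1_add_one (d : ℕ) [NeZero d] : ((d-1 : ℕ) : Fin d) + 1 = 0 := by
  have hd : 0 < d := Nat.pos_of_ne_zero (NeZero.ne d)
  have : ((d-1:ℕ):Fin d) + 1 = (((d-1)+1 : ℕ) : Fin d) := by push_cast; ring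
  rw [this]
  have : (d-1)+1 = d := by omega
  rw [this]
  exact Fin.natCast_self d

lemma sop_eq (d : ℕ) [NeZero d] (g : Fin d → Fin d) :
    Sop d g = ∑ j : Fin d,
      (if ∀ k : ℕ, k + 1 < d → g (j + (k:Fin d)) = j + (k:Fin d) + 1
        then Emat d j (g (j + ((d-1 : ℕ) : Fin d))) else 0) ⊗ₖ Emat d j j := by
  unfold Sop
  apply Finset.sum_congr rfl
  intro j _
  rw [finRange_map_eq d (fun k => Emat d (j + k) (g (j + k))),
    emat_prod_range d g j d (Nat.pos_of_ne_zero (NeZero.ne d))]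

lemma sop_succ (d : ℕ) [NeZero d] :
    Sop d (fun m => m + 1) = ∑ j : Fin d, Emat d j j ⊗ₖ Emat d j j := by
  rw [sop_eq]
  apply Finset.sum_congr rfl
  intro j _
  congr 1
  rw [if_pos (fun k _ => rfl)]
  congr 1
  rw [add_assoc, natCast_dsub1_add_one, add_zero]

lemma natCast_dsub1 (d : ℕ) [NeZero d] : ((d-1 : ℕ) : Fin d) = -1 := by
  have := natCast_dsub1_add_one d
  linear_combination this

lemma sop_jv (d : ℕ) [NeZero d] (hd : 2 ≤ d) (j₀ v : Fin d) (hv : v ≠ j₀) :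
    Sop d (Function.update (fun m => m + 1) (j₀ - 1) v) = Emat d j₀ v ⊗ₖ Emat d j₀ j₀ := by
  rw [sop_eq]
  rw [Finset.sum_eq_single_of_mem j₀ (Finset.mem_univ _)]
  · congr 1
    rw [if_pos]
    · congr 1
      rw [natCast_dsub1, show j₀ + -1 = j₀ - 1 by ring, Function.update_self]
    · intro k hk
      rw [Function.update_of_ne]
      intro h
      have h2 : ((k:Fin d)) + 1 = 0 := by linear_combination h
      have h4 : (((k+1 : ℕ)) : Fin d) = 0 := by push_cast; rw [h2]
      rw [Fin.natCast_eq_zero] at h4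
      have := Nat.le_of_dvd (by omega) h4
      omega
  · intro j _ hj
    rw [if_neg, Matrix.zero_kronecker]
    intro hall
    set k := ((j₀ - 1 - j : Fin d)).val with hkdef
    have hkcast : ((k : ℕ) : Fin d) = j₀ - 1 - j := Fin.cast_val_eq_self _
    have hklt : k < d := (j₀ - 1 - j).isLt
    have hk1 : k + 1 < d := by
      rcases Nat.lt_or_ge (k+1) d with h | h
      · exact h
      · exfalso
        have hkd : k = d - 1 := by omega
        have heq : ((d-1:ℕ) : Fin d) = j₀ - 1 - j := by rw [← hkd]; exact hkcast
        rw [natCast_dsub1] at heq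
        exact hj (by linear_combination heq)
    have hgood := hall k hk1
    rw [show j + ((k:ℕ):Fin d) = j₀ - 1 by rw [hkcast]; ring] at hgood
    rw [Function.update_self] at hgood
    exact hv (by rw [hgood]; ring)

section PSDhelp
variable {n : Type*} [Fintype n] [DecidableEq n]

lemma psd_diag_nonneg_s17 {R : Matrix n n ℂ} (hR : R.PosSemidef) (p : n) : 0 ≤ R p p := by
  have h := hR.dotProduct_mulVec_nonneg (Pi.single p (1:ℂ) : n → ℂ)
  have hs : star (Pi.single p (1:ℂ) : n → ℂ) = (Pi.single p (1:ℂ) : n → ℂ) := by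
    funext i; simp [Pi.single_apply, apply_ite]
  rw [hs, Matrix.mulVec_single, single_dotProduct] at h
  simpa using h

lemma psd_quad {R : Matrix n n ℂ} (hR : R.PosSemidef) (p q : n) (α β : ℂ) :
    0 ≤ star α * α * R p p + star α * β * R p q + star β * α * R q p + star β * β * R q q := by
  have h := hR.dotProduct_mulVec_nonneg (Pi.single p α + Pi.single q β : n → ℂ)
  have hmv : ∀ i, (R *ᵥ (Pi.single p α + Pi.single q β)) i = R i p * α + R i q * β := by
    intro i
    rw [Matrix.mulVec_add, Matrix.mulVec_single, Matrix.mulVec_single]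
    rfl
  have hdot : star (Pi.single p α + Pi.single q β) ⬝ᵥ (R *ᵥ (Pi.single p α + Pi.single q β))
      = star α * (R p p * α + R p q * β) + star β * (R q p * α + R q q * β) := by
    have hstar : star (Pi.single p α + Pi.single q β : n → ℂ) = (Pi.single p (star α) + Pi.single q (star β) : n → ℂ) := by
      funext i
      simp only [Pi.star_apply, Pi.add_apply, Pi.single_apply]
      split_ifs <;> simp
    rw [hstar, add_dotProduct]
    rw [single_dotProduct, single_dotProduct, hmv p, hmv q]
  rw [hdot] at h
  convert h using 1
  ring
end PSDhelp

section PSD2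
variable {n : Type*} [Fintype n] [DecidableEq n]

lemma quad_ineq (a b c : ℂ) (ha : 0 ≤ a) (hb : 0 ≤ b)
    (h : ∀ α β : ℂ, 0 ≤ star α * α * a + star α * β * c + star β * α * (star c) + star β * β * b) :
    c * star c ≤ a * b := by
  have haim : a.im = 0 := by rw [Complex.le_def] at ha; simpa using ha.2.symm
  have hbim : b.im = 0 := by rw [Complex.le_def] at hb; simpa using hb.2.symm
  have hare : 0 ≤ a.re := by rw [Complex.le_def] at ha; simpa using ha.1
  have hbre : 0 ≤ b.re := by rw [Complex.le_def] at hb; simpa using hb.1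
  obtain ⟨A, rfl⟩ : ∃ A : ℝ, a = (A : ℂ) := ⟨a.re, Complex.ext rfl (by simp [haim])⟩
  obtain ⟨B, rfl⟩ : ∃ B : ℝ, b = (B : ℂ) := ⟨b.re, Complex.ext rfl (by simp [hbim])⟩
  simp only [Complex.ofReal_re] at hare hbre
  have hcc : c * star c = (Complex.normSq c : ℂ) := by
    rw [Complex.star_def, Complex.mul_conj]
  rw [hcc, ← Complex.ofReal_mul, Complex.real_le_real]
  rcases lt_or_eq_of_le hare with hA | hA
  · have hq := h (-c) (A : ℂ)
    have hexp : star (-c) * (-c) * (A:ℂ) + star (-c) * (A:ℂ) * c + star (A:ℂ) * (-c) * (star c)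
        + star (A:ℂ) * (A:ℂ) * (B:ℂ)
        = ((A * (A * B - Complex.normSq c) : ℝ) : ℂ) := by
      simp only [Complex.star_def, map_neg, Complex.conj_ofReal]
      push_cast
      rw [Complex.normSq_eq_conj_mul_self]
      ring
    rw [hexp] at hq
    have h2 : (0:ℝ) ≤ A * (A * B - Complex.normSq c) := by
      rwa [← Complex.ofReal_zero, Complex.real_le_real] at hq
    nlinarith [Complex.normSq_nonneg c]
  · have key : ∀ t : ℝ, (0:ℝ) ≤ B - 2 * t * Complex.normSq c := by
      intro t
      have hq := h ((-(t:ℂ)) * c) 1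
      have hexp : star ((-(t:ℂ)) * c) * ((-(t:ℂ)) * c) * (A:ℂ) + star ((-(t:ℂ)) * c) * 1 * c
          + star (1:ℂ) * ((-(t:ℂ)) * c) * (star c) + star (1:ℂ) * 1 * (B:ℂ)
          = ((t^2 * Complex.normSq c * A + B - 2 * t * Complex.normSq c : ℝ) : ℂ) := by
        simp only [Complex.star_def, _root_.map_mul, _root_.map_neg, Complex.conj_ofReal, _root_.map_one]
        push_cast
        rw [Complex.normSq_eq_conj_mul_self]
        ring
      rw [hexp] at hq
      rw [← Complex.ofReal_zero, Complex.real_le_real] at hq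
      rw [← hA] at hq
      nlinarith [hq]
    have hc0 : Complex.normSq c = 0 := by
      by_contra hne
      have hpos : 0 < Complex.normSq c := lt_of_le_of_ne (Complex.normSq_nonneg c) (Ne.symm hne)
      have hk := key ((B + 1) / (2 * Complex.normSq c))
      have h2 : 2 * ((B + 1) / (2 * Complex.normSq c)) * Complex.normSq c = B + 1 := by
        field_simp
      nlinarith
    nlinarith

lemma psd_entry_sq {R : Matrix n n ℂ} (hR : R.PosSemidef) (p q : n) :
    R p q * star (R p q) ≤ R p p * R q q := by
  have hqp : R q p = star (R p q) := by
    have h0 := congrFun (congrFun hR.1 p) q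
    rw [Matrix.conjTranspose_apply] at h0
    rw [← h0, star_star]
  apply quad_ineq _ _ _ (psd_diag_nonneg_s17 hR p) (psd_diag_nonneg_s17 hR q)
  intro α β
  have := psd_quad hR p q α β
  rwa [hqp] at this
end PSD2

section PSD3
variable {n : Type*} [Fintype n] [DecidableEq n]

lemma psd_row_zero {R : Matrix n n ℂ} (hR : R.PosSemidef) (p : n) (h : R p p = 0) (q : n) :
    R p q = 0 := by
  have h1 := psd_entry_sq hR p q
  rw [h, zero_mul] at h1
  have h2 : 0 ≤ R p q * star (R p q) := by
    rw [Complex.star_def, Complex.mul_conj, ← Complex.ofReal_zero, Complex.real_le_real]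
    exact Complex.normSq_nonneg _
  have h3 : R p q * star (R p q) = 0 := le_antisymm h1 h2
  rw [Complex.star_def, Complex.mul_conj] at h3
  have : Complex.normSq (R p q) = 0 := by exact_mod_cast h3
  exact Complex.normSq_eq_zero.mp this

lemma psd_trace_zero {R : Matrix n n ℂ} (hR : R.PosSemidef) (h : R.trace = 0) : R = 0 := by
  have hdiag : ∀ p, R p p = 0 := by
    have := (Finset.sum_eq_zero_iff_of_nonneg (fun i _ => psd_diag_nonneg_s17 hR i)).mp h
    intro p; exact this p (Finset.mem_univ p)
  ext p q
  rw [Matrix.zero_apply]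
  exact psd_row_zero hR p (hdiag p) q

lemma psd_sum {ι : Type*} (s : Finset ι) (f : ι → Matrix n n ℂ)
    (h : ∀ i ∈ s, (f i).PosSemidef) : (∑ i ∈ s, f i).PosSemidef := by
  classical
  induction s using Finset.induction_on with
  | empty => simpa using Matrix.PosSemidef.zero
  | insert _ _ hni ih =>
    rw [Finset.sum_insert hni]
    exact (h _ (Finset.mem_insert_self _ _)).add (ih (fun i hi => h i (Finset.mem_insert_of_mem hi)))

section Main
variable {d D : ℕ} [NeZero d] [NeZero D]

-- the diagonal projector form of Sop for the successor index function
lemma sop_succ_diag (d : ℕ) [NeZero d] :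
    Sop d (fun m => m + 1)
      = Matrix.diagonal (fun r : Fin d × Fin d => if r.1 = r.2 then (1:ℂ) else 0) := by
  rw [sop_succ]
  ext ⟨a,b⟩ ⟨c,e⟩
  rw [Matrix.sum_apply]
  rw [Finset.sum_eq_single a]
  · simp only [Matrix.kroneckerMap_apply, Emat, Matrix.single, Matrix.of_apply,
      Matrix.diagonal_apply]
    by_cases h1 : a = b <;> by_cases h2 : a = c <;> by_cases h3 : b = e <;>
      simp_all [Prod.ext_iff] <;> tauto
  · intro j _ hj
    simp only [Matrix.kroneckerMap_apply, Emat, Matrix.single, Matrix.of_apply]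
    rw [if_neg (by tauto), zero_mul]
  · intro h
    exact absurd (Finset.mem_univ a) h

lemma one_kron_diag (d D : ℕ) [NeZero d] [NeZero D] :
    ((1 : Matrix (Fin D) (Fin D) ℂ) ⊗ₖ Sop d (fun m => m + 1))
      = Matrix.diagonal (fun p : Fin D × (Fin d × Fin d) =>
          if p.2.1 = p.2.2 then (1:ℂ) else 0) := by
  rw [sop_succ_diag, ← Matrix.diagonal_one, Matrix.diagonal_kronecker_diagonal]
  congr 1
  funext p
  simp

lemma mul_single_row {N : Type*} [Fintype N] [DecidableEq N]
    (M ρ : Matrix N N ℂ) (p : N) (r₀ : N) (h : ∀ r, M p r = if r = r₀ then 1 else 0)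
    (q : N) : (M * ρ) p q = ρ r₀ q := by
  rw [Matrix.mul_apply]
  rw [Finset.sum_eq_single r₀]
  · rw [h r₀, if_pos rfl, one_mul]
  · intro r _ hr
    rw [h r, if_neg hr, zero_mul]
  · intro h'
    exact absurd (Finset.mem_univ r₀) h'

end Main

lemma Mjv_row_entry (d D : ℕ) [NeZero d] [NeZero D] (j v : Fin d) (x : Fin D)
    (r : Fin D × (Fin d × Fin d)) :
    ((1 : Matrix (Fin D) (Fin D) ℂ) ⊗ₖ (Emat d j v ⊗ₖ Emat d j j)) (x, (j, j)) r
      = if r = (x, (v, j)) then 1 else 0 := by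
  obtain ⟨y, c, e⟩ := r
  simp only [Matrix.kroneckerMap_apply, Emat, Matrix.single, Matrix.of_apply,
    Matrix.one_apply, Prod.mk.injEq]
  by_cases h1 : x = y <;> by_cases h2 : v = c <;> by_cases h3 : j = e <;>
    simp_all [eq_comm]

open scoped MatrixOrder in
lemma psd_exists_sqrt {n : Type*} [Fintype n] [DecidableEq n] {R : Matrix n n ℂ}
    (hR : R.PosSemidef) : ∃ X : Matrix n n ℂ, Xᴴ = X ∧ X * X = R := by
  obtain ⟨X, hX, -, hXX⟩ :=
    CFC.exists_sqrt_of_isSelfAdjoint_of_quasispectrumRestricts hR.isHermitian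
      (QuasispectrumRestricts.nnreal_of_nonneg hR.nonneg)
  exact ⟨X, hX.star_eq, by rw [hXX]⟩

/-- core of Lemma 8: if the controlled-order channel applied to the last two
factors of `ρ*` (with identity on the first factor) yields the pure state `ψψ†` with
`ψ = (1/√d) Σ_j ψ_j ⊗ e_j ⊗ e_j`, `ψ_j` orthonormal, then `ρ* = ψψ†`. -/
theorem stmt_17 (d D : ℕ) [NeZero d] [NeZero D] (hd : 2 ≤ d)
    (ψv : Fin d → Fin D → ℂ)
    (hψv : ∀ j j' : Fin d, star (ψv j) ⬝ᵥ ψv j' = if j = j' then 1 else 0)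
    (ρstar : Matrix (Fin D × (Fin d × Fin d)) (Fin D × (Fin d × Fin d)) ℂ)
    (hpos : ρstar.PosSemidef) (htr : ρstar.trace = 1)
    (hch : ∑ idx : Fin d → Fin d,
        ((1 : Matrix (Fin D) (Fin D) ℂ) ⊗ₖ Sop d idx) * ρstar *
          ((1 : Matrix (Fin D) (Fin D) ℂ) ⊗ₖ Sop d idx)ᴴ =
      vecMulVec (GHZpsi d D ψv) (star (GHZpsi d D ψv))) :
    ρstar = vecMulVec (GHZpsi d D ψv) (star (GHZpsi d D ψv)) := by
  classical
  set ψ := GHZpsi d D ψv with hψdef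
  set B := vecMulVec ψ (star ψ) with hBdef
  set f : (Fin d → Fin d) → Matrix (Fin D × (Fin d × Fin d)) (Fin D × (Fin d × Fin d)) ℂ :=
    fun idx => ((1 : Matrix (Fin D) (Fin D) ℂ) ⊗ₖ Sop d idx) * ρstar *
      ((1 : Matrix (Fin D) (Fin D) ℂ) ⊗ₖ Sop d idx)ᴴ with hfdef
  have hfpsd : ∀ idx, (f idx).PosSemidef := fun idx =>
    hpos.mul_mul_conjTranspose_same _
  have hsplit : ∀ idx₀ : Fin d → Fin d, ∃ Rest : Matrix _ _ ℂ,
      Rest.PosSemidef ∧ B = f idx₀ + Rest := by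
    intro idx₀
    refine ⟨∑ idx ∈ Finset.univ.erase idx₀, f idx,
      psd_sum _ _ (fun i _ => hfpsd i), ?_⟩
    rw [← hch, ← Finset.add_sum_erase _ f (Finset.mem_univ idx₀)]
  have hBapp : ∀ p q, B p q = ψ p * star (ψ q) := by
    intro p q
    rw [hBdef, Matrix.vecMulVec_apply, Pi.star_apply]
  -- ψ entries
  have hψapp : ∀ p : Fin D × (Fin d × Fin d),
      ψ p = ((1 / Real.sqrt d : ℝ) : ℂ) * (if p.2.1 = p.2.2 then ψv p.2.1 p.1 else 0) := fun p => rfl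
  have hdpos : (0:ℝ) < d := by
    have := Nat.pos_of_ne_zero (NeZero.ne d); exact_mod_cast this
  have hsqd : ((1 / Real.sqrt d : ℝ) : ℂ) ≠ 0 := by
    simp only [ne_eq, Complex.ofReal_eq_zero, div_eq_zero_iff, one_ne_zero, false_or]
    positivity
  -- Step 3: for each j v with v ≠ j, the corresponding Kraus term annihilates ρstar
  have hstep3 : ∀ j v : Fin d, v ≠ j →
      (((1 : Matrix (Fin D) (Fin D) ℂ) ⊗ₖ (Emat d j v ⊗ₖ Emat d j j)) * ρstar)
        = 0 := by
    intro j v hvj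
    set M := ((1 : Matrix (Fin D) (Fin D) ℂ) ⊗ₖ (Emat d j v ⊗ₖ Emat d j j)) with hMdef
    set A := M * ρstar * Mᴴ with hAdef
    have hidx : Sop d (Function.update (fun m => m + 1) (j - 1) v) = Emat d j v ⊗ₖ Emat d j j :=
      sop_jv d hd j v hvj
    have hfA : f (Function.update (fun m => m + 1) (j - 1) v) = A := by
      rw [hAdef, hMdef, ← hidx]
    have hApsd : A.PosSemidef := hpos.mul_mul_conjTranspose_same _
    -- row support of M
    have hMrow : ∀ p r : Fin D × (Fin d × Fin d), p.2 ≠ (j, j) → M p r = 0 := by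
      intro p r hp
      rw [hMdef]
      simp only [Matrix.kroneckerMap_apply, Emat, Matrix.single, Matrix.of_apply]
      have h : ¬ (p.2.1 = j ∧ p.2.2 = j) := by
        rintro ⟨h1, h2⟩
        exact hp (by rw [Prod.ext_iff]; exact ⟨h1, h2⟩)
      by_cases h1 : j = p.2.1 <;> by_cases h2 : j = p.2.2 <;> simp_all <;> tauto
    have hArow : ∀ p q, p.2 ≠ (j, j) → A p q = 0 := by
      intro p q hp
      rw [hAdef, Matrix.mul_apply]
      apply Finset.sum_eq_zero
      intro s _
      rw [Matrix.mul_apply]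
      rw [Finset.sum_eq_zero, zero_mul]
      intro r _
      rw [hMrow p r hp, zero_mul]
    have hAcol : ∀ p q, q.2 ≠ (j, j) → A p q = 0 := by
      intro p q hq
      have hherm := congrFun (congrFun hApsd.1 q) p
      rw [Matrix.conjTranspose_apply] at hherm
      rw [show A p q = star (A q p) by rw [← hherm, star_star], hArow q p hq, star_zero]
    -- A ≤ B via the decomposition
    obtain ⟨Rest, hRestPsd, hBsum⟩ := hsplit (Function.update (fun m => m + 1) (j - 1) v)
    rw [hfA] at hBsum
    -- choose j' ≠ j
    have hone : (1 : Fin d) ≠ 0 := by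
      intro h
      have := congrArg Fin.val h
      simp [Fin.val_one, Nat.mod_eq_of_lt (by omega : 1 < d)] at this
    set j' := j + 1 with hj'def
    have hj'ne : j' ≠ j := by
      intro h
      exact hone (add_left_cancel (show j + 1 = j + 0 by rw [add_zero]; exact h))
    -- choose y with ψv j' y ≠ 0
    obtain ⟨y, hy⟩ : ∃ y, ψv j' y ≠ 0 := by
      by_contra hcon
      push_neg at hcon
      have h1 := hψv j' j'
      rw [if_pos rfl] at h1
      rw [dotProduct] at h1
      simp only [hcon, Pi.star_apply] at h1
      simp at h1
    set q : Fin D × (Fin d × Fin d) := (y, (j', j')) with hqdef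
    have hq2 : q.2 ≠ (j, j) := by
      simp only [hqdef, ne_eq, Prod.mk.injEq]
      tauto
    have hBqq : B q q = ψ q * star (ψ q) := hBapp q q
    have hψq : ψ q ≠ 0 := by
      have hq1 : q.2.1 = j' := rfl
      have hq2' : q.2.2 = j' := rfl
      have hq3 : q.1 = y := rfl
      rw [hψapp q, hq1, hq2', hq3, if_pos rfl]
      exact mul_ne_zero hsqd hy
    have hBqqne : B q q ≠ 0 := by
      rw [hBqq]
      exact mul_ne_zero hψq (star_ne_zero.mpr hψq)
    -- diag of A vanishes
    have hAdiag : ∀ p, A p p = 0 := by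
      intro p
      by_cases hp : p.2 = (j, j)
      · have hpq : A p q = 0 := hAcol p q hq2
        have hqq : A q q = 0 := hArow q q hq2
        have hRpq : Rest p q = B p q - A p q := by rw [hBsum]; simp
        have hRqq : Rest q q = B q q - A q q := by rw [hBsum]; simp
        have hRpp : Rest p p = B p p - A p p := by rw [hBsum]; simp
        have hkey := psd_entry_sq hRestPsd p q
        rw [hRpq, hRqq, hRpp, hpq, hqq, sub_zero, sub_zero] at hkey
        have hBrank : B p q * star (B p q) = B p p * B q q := by
          rw [hBapp p q, hBapp p p, hBapp q q]
          rw [star_mul', star_star]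
          ring
        rw [hBrank] at hkey
        -- B p p * B q q ≤ (B p p - A p p) * B q q
        have h2 : A p p * B q q ≤ 0 := by
          have := sub_nonneg.mpr hkey
          have hexp : (B p p - A p p) * B q q - B p p * B q q = -(A p p * B q q) := by ring
          rw [hexp] at this
          exact neg_nonneg.mp this
        have h3 : 0 ≤ A p p * B q q := by
          apply mul_nonneg (psd_diag_nonneg_s17 hApsd p)
          rw [hBqq, Complex.star_def, Complex.mul_conj, ← Complex.ofReal_zero,
            Complex.real_le_real]
          exact Complex.normSq_nonneg _
        have h4 : A p p * B q q = 0 := le_antisymm h2 h3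
        rcases mul_eq_zero.mp h4 with h | h
        · exact h
        · exact absurd h hBqqne
      · exact hArow p p hp
    have hA0 : A = 0 := by
      ext p q'
      rw [Matrix.zero_apply]
      exact psd_row_zero hApsd p (hAdiag p) q'
    -- from A = 0 deduce M * ρstar = 0
    obtain ⟨X, hherm, hsq⟩ := psd_exists_sqrt hpos
    have hMs : (M * X) * (M * X)ᴴ = 0 := by
      rw [Matrix.conjTranspose_mul, hherm]
      calc M * X * (X * Mᴴ) = M * (X * X) * Mᴴ := by
            rw [Matrix.mul_assoc, Matrix.mul_assoc, Matrix.mul_assoc]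
        _ = A := by rw [hsq, hAdef, Matrix.mul_assoc]
        _ = 0 := hA0
    have hMsqrt : M * X = 0 := Matrix.self_mul_conjTranspose_eq_zero.mp hMs
    calc M * ρstar = M * (X * X) := by rw [hsq]
      _ = (M * X) * X := by rw [Matrix.mul_assoc]
      _ = 0 := by rw [hMsqrt, Matrix.zero_mul]
  -- Step 4: off-diagonal (in the d×d block structure) rows of ρstar vanish
  have hrow : ∀ p q : Fin D × (Fin d × Fin d), p.2.1 ≠ p.2.2 → ρstar p q = 0 := by
    intro p q hp
    obtain ⟨x, a, b⟩ : _ := p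
    simp only at hp
    -- here a ≠ b ; apply hstep3 with j := b, v := a
    have h0 := hstep3 b a hp
    have hent := congrFun (congrFun h0 (x, (b, b))) q
    rw [Matrix.zero_apply] at hent
    rw [← hent]
    symm
    apply mul_single_row _ _ _ ((x, (a, b)) : Fin D × (Fin d × Fin d))
    intro r
    exact Mjv_row_entry d D b a x r
  have hcol : ∀ p q : Fin D × (Fin d × Fin d), q.2.1 ≠ q.2.2 → ρstar p q = 0 := by
    intro p q hq
    have hherm := congrFun (congrFun hpos.1 q) p
    rw [Matrix.conjTranspose_apply] at hherm
    rw [show ρstar p q = star (ρstar q p) by rw [← hherm, star_star], hrow q p hq, star_zero]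
  -- Step 5 : f succ = ρstar
  have hfsucc : f (fun m => m + 1) = ρstar := by
    rw [hfdef]
    simp only
    rw [one_kron_diag d D]
    set χ := (fun p : Fin D × (Fin d × Fin d) => if p.2.1 = p.2.2 then (1:ℂ) else 0) with hχ
    have hstar : star χ = χ := by
      funext p
      rw [hχ, Pi.star_apply]
      by_cases h : p.2.1 = p.2.2 <;> simp [h]
    rw [Matrix.diagonal_conjTranspose, hstar]
    ext p q
    rw [Matrix.mul_diagonal, Matrix.diagonal_mul]
    by_cases hp : p.2.1 = p.2.2
    · by_cases hq : q.2.1 = q.2.2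
      · simp only [hχ, if_pos hp, if_pos hq, one_mul, mul_one]
      · rw [hcol p q hq]; simp
    · rw [hrow p q hp]
      simp only [hχ, if_neg hp, zero_mul, mul_zero]
  -- Step 6 : trace argument
  have hc2 : ((1 / Real.sqrt d : ℝ) : ℂ) * ((1 / Real.sqrt d : ℝ) : ℂ) = 1 / (d:ℂ) := by
    rw [← Complex.ofReal_mul]
    rw [div_mul_div_comm, one_mul, Real.mul_self_sqrt hdpos.le]
    push_cast
    ring
  have htrB : B.trace = 1 := by
    have htr1 : B.trace = ∑ p : Fin D × (Fin d × Fin d), B p p := rfl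
    rw [htr1]
    have hBdiag : ∀ p : Fin D × (Fin d × Fin d),
        B p p = (1 / (d:ℂ)) * (if p.2.1 = p.2.2 then ψv p.2.1 p.1 * star (ψv p.2.1 p.1) else 0) := by
      intro p
      rw [hBapp p p, hψapp p]
      rw [star_mul', Complex.star_def, Complex.conj_ofReal]
      by_cases hp : p.2.1 = p.2.2
      · rw [if_pos hp, if_pos hp, ← hc2]
        ring
      · rw [if_neg hp, if_neg hp, mul_zero, zero_mul, mul_zero]
    simp only [hBdiag]
    rw [Fintype.sum_prod_type]
    have hinner : ∀ x : Fin D, ∑ r : Fin d × Fin d,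
        (1 / (d:ℂ)) * (if r.1 = r.2 then ψv r.1 x * star (ψv r.1 x) else 0)
        = ∑ a : Fin d, (1 / (d:ℂ)) * (ψv a x * star (ψv a x)) := by
      intro x
      rw [Fintype.sum_prod_type]
      apply Finset.sum_congr rfl
      intro a _
      rw [Finset.sum_eq_single a]
      · simp
      · intro b _ hb
        have hba : ¬ a = b := fun h => hb h.symm
        simp [hba]
      · intro h; exact absurd (Finset.mem_univ a) h
    simp only [hinner]
    rw [Finset.sum_comm]
    have houter : ∀ a : Fin d, ∑ x : Fin D, (1 / (d:ℂ)) * (ψv a x * star (ψv a x))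
        = 1 / (d:ℂ) := by
      intro a
      rw [← Finset.mul_sum]
      have := hψv a a
      rw [if_pos rfl, dotProduct] at this
      have hsum : ∑ x : Fin D, ψv a x * star (ψv a x) = 1 := by
        rw [← this]
        apply Finset.sum_congr rfl
        intro x _
        rw [Pi.star_apply]
        ring
      rw [hsum, mul_one]
    simp only [houter]
    rw [Finset.sum_const, Finset.card_univ, Fintype.card_fin]
    rw [nsmul_eq_mul]
    have hdne : (d:ℂ) ≠ 0 := by
      exact_mod_cast Nat.cast_ne_zero.mpr (NeZero.ne d)
    field_simp
  obtain ⟨Rest, hRestPsd, hBsum⟩ := hsplit (fun m => m + 1)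
  rw [hfsucc] at hBsum
  have htrRest : Rest.trace = 0 := by
    have := congrArg Matrix.trace hBsum
    rw [Matrix.trace_add, htr, htrB] at this
    linear_combination -this
  have hRest0 : Rest = 0 := psd_trace_zero hRestPsd htrRest
  rw [hRest0, add_zero] at hBsum
  rw [hBdef, hψdef] at hBsum
  exact hBsum.symm
end PSD3
end
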